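/- arXiv:1906.08039 — 5 statements merged into one kernel-verified Lean document; each statement's English description precedes it below -/
import Mathlib

section
/- Let 1 ≤ p < ∞ and let f : X → ℝ admit a Barron representation ρ with M := ∫_Ω |a|·(‖b‖₁ + |c|) dρ(a,b,c) < ∞. Then for every ε > 0 there exists a Barron representation ρ̃ of f with ( ∫_Ω (|a|·(‖b‖₁ + |c|))^p dρ̃(a,b,c) )^{1/p} ≤ M + ε. (Consequently all the B_p Barron norms of f, 1 ≤ p ≤ ∞, are equal.) -/
open MeasureTheory
open scoped NNReal ENNReal

noncomputable section

/-- ReLU activation. -/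
def relu (t : ℝ) : ℝ := max t 0

/-- The cube `X = [0,1]^d`. -/
def cube (d : ℕ) : Set (Fin d → ℝ) := Set.Icc 0 1

/-- ℓ¹ norm on `ℝ^d`. -/
def l1norm {d : ℕ} (b : Fin d → ℝ) : ℝ := ∑ i, |b i|

/-- The neuron `(a,b,c) ↦ a · σ(bᵀx + c)`. -/
def act {d : ℕ} (x : Fin d → ℝ) (p : ℝ × (Fin d → ℝ) × ℝ) : ℝ :=
  p.1 * relu ((∑ i, p.2.1 i * x i) + p.2.2)

/-- `ρ` is a Barron representation of `f : X → ℝ`. -/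
def IsBarronRep {d : ℕ} (f : (Fin d → ℝ) → ℝ)
    (ρ : Measure (ℝ × (Fin d → ℝ) × ℝ)) : Prop :=
  IsProbabilityMeasure ρ ∧
    ∀ x ∈ cube d, Integrable (act x) ρ ∧ f x = ∫ p, act x p ∂ρ

/-- The weight `|a| · (‖b‖₁ + |c|)`. -/
def wt {d : ℕ} (p : ℝ × (Fin d → ℝ) × ℝ) : ℝ := |p.1| * (l1norm p.2.1 + |p.2.2|)

lemma wt_nonneg {d : ℕ} (q : ℝ × (Fin d → ℝ) × ℝ) : 0 ≤ wt q := by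
  unfold wt l1norm
  positivity

lemma measurable_wt {d : ℕ} : Measurable (wt : ℝ × (Fin d → ℝ) × ℝ → ℝ) := by
  unfold wt l1norm
  fun_prop

lemma continuous_act {d : ℕ} (x : Fin d → ℝ) : Continuous (act x) := by
  unfold act relu
  fun_prop

lemma act_eq_zero_of_wt_eq_zero {d : ℕ} (x : Fin d → ℝ) (q : ℝ × (Fin d → ℝ) × ℝ)
    (h : wt q = 0) : act x q = 0 := by
  rcases mul_eq_zero.1 h with h1 | h2
  · simp [act, abs_eq_zero.1 h1]
  · have hl : 0 ≤ l1norm q.2.1 := by unfold l1norm; positivity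
    have hl0 : l1norm q.2.1 = 0 ∧ |q.2.2| = 0 := by
      constructor <;> nlinarith [abs_nonneg q.2.2]
    have hb : ∀ i, q.2.1 i = 0 := by
      intro i
      have := (Finset.sum_eq_zero_iff_of_nonneg (fun i _ => abs_nonneg (q.2.1 i))).1 hl0.1
      exact abs_eq_zero.1 (this i (Finset.mem_univ i))
    have hc : q.2.2 = 0 := abs_eq_zero.1 hl0.2
    simp [act, relu, hb, hc]

/-- for `1 ≤ p < ∞`, if `f` has a Barron representation with
`M = ∫ |a|(‖b‖₁+|c|) dρ < ∞`, then for every `ε > 0` there is a Barron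
representation `ρ̃` of `f` with `(∫ (|a|(‖b‖₁+|c|))^p dρ̃)^(1/p) ≤ M + ε`. -/
theorem barron_bp_eq_b1 {d : ℕ} (hd : 1 ≤ d) (p : ℝ) (hp : 1 ≤ p)
    (f : (Fin d → ℝ) → ℝ)
    (ρ : Measure (ℝ × (Fin d → ℝ) × ℝ)) (hρ : IsBarronRep f ρ)
    (hint : Integrable wt ρ) (M : ℝ) (hM : M = ∫ q, wt q ∂ρ)
    (ε : ℝ) (hε : 0 < ε) :
    ∃ ρ' : Measure (ℝ × (Fin d → ℝ) × ℝ),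
      IsBarronRep f ρ' ∧ Integrable (fun q => wt q ^ p) ρ' ∧
        (∫ q, wt q ^ p ∂ρ') ^ (1 / p) ≤ M + ε := by
  have hp0 : p ≠ 0 := by linarith
  obtain ⟨hρprob, hρrep⟩ := hρ
  have hMnn : 0 ≤ M := hM ▸ integral_nonneg wt_nonneg
  rcases eq_or_lt_of_le hMnn with hM0 | hMpos
  · -- M = 0 : take the Dirac mass at the zero neuron
    have hwt0 : wt =ᵐ[ρ] (0 : ℝ × (Fin d → ℝ) × ℝ → ℝ) :=
      (integral_eq_zero_iff_of_nonneg wt_nonneg hint).1 (by rw [← hM, ← hM0])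
    refine ⟨Measure.dirac (0, 0, 0), ⟨inferInstance, ?_⟩, ?_, ?_⟩
    · intro x hx
      have hf0 : f x = 0 := by
        rw [(hρrep x hx).2]
        rw [integral_congr_ae (hwt0.mono fun q hq =>
          act_eq_zero_of_wt_eq_zero x q (by simpa using hq))]
        simp
      constructor
      · exact (integrable_const (act x (0, 0, 0))).congr (ae_eq_dirac (act x)).symm
      · rw [integral_dirac, hf0]
        simp [act]
    · exact (integrable_const (wt ((0:ℝ), (0 : Fin d → ℝ), (0:ℝ)) ^ p)).congr
        (ae_eq_dirac (fun q => wt q ^ p)).symm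
    · rw [integral_dirac]
      have : wt ((0 : ℝ), (0 : Fin d → ℝ), (0 : ℝ)) = 0 := by simp [wt, l1norm]
      rw [this, Real.zero_rpow hp0, Real.zero_rpow (by simpa using hp0)]
      linarith
  · -- M > 0 : renormalize
    set T : ℝ × (Fin d → ℝ) × ℝ → ℝ × (Fin d → ℝ) × ℝ :=
      fun q => (M * q.1 / wt q, q.2) with hT
    have hTmeas : Measurable T :=
      ((measurable_const.mul measurable_fst).div measurable_wt).prodMk measurable_snd
    set gnn : ℝ × (Fin d → ℝ) × ℝ → ℝ≥0 := fun q => (wt q / M).toNNReal with hgnn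
    have hgnn_meas : Measurable gnn := (measurable_wt.div_const M).real_toNNReal
    have hgnn_coe : ∀ q, ((gnn q : ℝ)) = wt q / M := fun q =>
      Real.coe_toNNReal _ (div_nonneg (wt_nonneg q) hMnn)
    set μ := ρ.withDensity (fun q => (gnn q : ℝ≥0∞)) with hμ
    have hofReal : ∀ q, ((gnn q : ℝ≥0) : ℝ≥0∞) = ENNReal.ofReal (wt q / M) := fun q => rfl
    have hμuniv : μ Set.univ = 1 := by
      rw [hμ, withDensity_apply _ MeasurableSet.univ, setLIntegral_univ]
      simp_rw [hofReal]
      rw [← ofReal_integral_eq_lintegral_ofReal (hint.div_const M)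
        (ae_of_all _ fun q => div_nonneg (wt_nonneg q) hMnn)]
      rw [integral_div, ← hM, div_self hMpos.ne']
      simp
    -- key pointwise identity
    have hwtT : ∀ q : ℝ × (Fin d → ℝ) × ℝ, wt q ≠ 0 → wt (T q) = M := by
      intro q hq
      have : wt (T q) = |M * q.1 / wt q| * (l1norm q.2.1 + |q.2.2|) := rfl
      rw [this, abs_div, abs_mul, abs_of_nonneg hMnn, abs_of_nonneg (wt_nonneg q)]
      rw [div_mul_eq_mul_div, mul_assoc]
      show M * wt q / wt q = M
      rw [mul_div_assoc, div_self hq, mul_one]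
    have hkey : ∀ (x : Fin d → ℝ) (q : ℝ × (Fin d → ℝ) × ℝ),
        (wt q / M) * act x (T q) = act x q := by
      intro x q
      by_cases hq : wt q = 0
      · rw [act_eq_zero_of_wt_eq_zero x q hq, hq]
        simp
      · have : act x (T q) = (M * q.1 / wt q) * relu ((∑ i, q.2.1 i * x i) + q.2.2) := rfl
        rw [this]
        show wt q / M * (M * q.1 / wt q * relu _) = act x q
        field_simp [act]
        rfl
    refine ⟨μ.map T, ⟨⟨by rw [Measure.map_apply hTmeas MeasurableSet.univ,
      Set.preimage_univ, hμuniv]⟩, ?_⟩, ?_, ?_⟩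
    · intro x hx
      obtain ⟨hintx, hfx⟩ := hρrep x hx
      have hsm : AEStronglyMeasurable (act x) (μ.map T) :=
        (continuous_act x).aestronglyMeasurable
      have hint2 : Integrable (fun q => act x (T q)) μ := by
        rw [hμ, integrable_withDensity_iff_integrable_smul hgnn_meas]
        refine hintx.congr (ae_of_all _ fun q => ?_)
        simp only [NNReal.smul_def, smul_eq_mul]
        rw [hgnn_coe, hkey]
      constructor
      · exact (integrable_map_measure hsm hTmeas.aemeasurable).2 hint2
      · rw [integral_map hTmeas.aemeasurable hsm, hμ,
          integral_withDensity_eq_integral_smul hgnn_meas]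
        rw [hfx]
        refine integral_congr_ae (ae_of_all _ fun q => ?_)
        simp only [NNReal.smul_def, smul_eq_mul]
        rw [hgnn_coe, hkey]
    · -- integrability of wt^p
      have hsm : AEStronglyMeasurable (fun q => wt q ^ p) (μ.map T) :=
        (measurable_wt.pow_const p).aestronglyMeasurable
      rw [integrable_map_measure hsm hTmeas.aemeasurable]
      have hae : ∀ᵐ q ∂μ, wt q ≠ 0 := by
        rw [hμ, ae_withDensity_iff (hgnn_meas.coe_nnreal_ennreal)]
        refine ae_of_all _ fun q hq => ?_
        intro h0
        apply hq
        rw [hofReal, h0]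
        simp
      have : IsProbabilityMeasure μ := ⟨hμuniv⟩
      exact (integrable_const (M ^ p)).congr
        (hae.mono fun q hq => by simp only [Function.comp, hwtT q hq])
    · have hsm : AEStronglyMeasurable (fun q => wt q ^ p) (μ.map T) :=
        (measurable_wt.pow_const p).aestronglyMeasurable
      rw [integral_map hTmeas.aemeasurable hsm]
      have hae : ∀ᵐ q ∂μ, wt q ≠ 0 := by
        rw [hμ, ae_withDensity_iff (hgnn_meas.coe_nnreal_ennreal)]
        refine ae_of_all _ fun q hq => ?_
        intro h0
        apply hq
        rw [hofReal, h0]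
        simp
      have : IsProbabilityMeasure μ := ⟨hμuniv⟩
      rw [integral_congr_ae (hae.mono fun q hq => by rw [hwtT q hq] : _ =ᵐ[μ] fun _ => M ^ p),
        integral_const, probReal_univ, one_smul]
      have : (M ^ p) ^ (1 / p) = M := by
        rw [← Real.rpow_mul hMnn, mul_one_div, div_self hp0, Real.rpow_one]
      rw [this]
      linarith
end
end

section
/- Let π be a probability measure on 𝕊^d = {w ∈ ℝ^{d+1} : ‖w‖₁ = 1} and let a : 𝕊^d → ℝ be measurable with ∫_{𝕊^d} |a(w)|² dπ(w) < ∞. Define f : X → ℝ by f(x) = ∫_{𝕊^d} a(w) σ(wᵀx̃) dπ(w). Then f admits a Barron representation ρ with ∫_Ω |a|²·(‖b‖₁ + |c|)² dρ(a,b,c) ≤ ∫_{𝕊^d} |a(w)|² dπ(w). (This is the inclusion of the RKHS induced by the kernel k_π(x,x') = E_{w∼π}[σ(wᵀx̃)σ(wᵀx̃')] into the Barron space B₂.) -/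
open MeasureTheory

noncomputable section

/-- `wᵀx̃` for `w ∈ ℝ^{d+1}`, `x̃ = (x,1)`. -/
def actS {d : ℕ} (x : Fin d → ℝ) (w : Fin (d + 1) → ℝ) : ℝ :=
  (∑ i : Fin d, w i.castSucc * x i) + w (Fin.last d)

/-- every function in the RKHS `H_{k_π}` belongs to the Barron space `B₂`. -/
theorem rkhs_subset_barron {d : ℕ} (hd : 1 ≤ d)
    (π : Measure (Fin (d + 1) → ℝ)) (hπ : IsProbabilityMeasure π)
    (hsphere : ∀ᵐ w ∂π, l1norm w = 1)
    (a : (Fin (d + 1) → ℝ) → ℝ) (ha : Measurable a)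
    (ha2 : Integrable (fun w => a w ^ 2) π)
    (f : (Fin d → ℝ) → ℝ)
    (hfint : ∀ x ∈ cube d, Integrable (fun w => a w * relu (actS x w)) π)
    (hf : ∀ x ∈ cube d, f x = ∫ w, a w * relu (actS x w) ∂π) :
    ∃ ρ : Measure (ℝ × (Fin d → ℝ) × ℝ),
      IsBarronRep f ρ ∧ Integrable (fun p => wt p ^ 2) ρ ∧
        ∫ p, wt p ^ 2 ∂ρ ≤ ∫ w, a w ^ 2 ∂π := by
  set T : (Fin (d + 1) → ℝ) → ℝ × (Fin d → ℝ) × ℝ :=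
    fun w => (a w, fun i => w i.castSucc, w (Fin.last d)) with hTdef
  have hT : Measurable T :=
    ha.prodMk ((measurable_pi_lambda _ fun i => measurable_pi_apply _).prodMk
      (measurable_pi_apply _))
  have hrelu : Measurable relu := continuous_id.max continuous_const |>.measurable
  have hwtm : Measurable (fun p : ℝ × (Fin d → ℝ) × ℝ => wt p ^ 2) := by
    unfold wt l1norm
    exact ((measurable_fst.abs.mul
      ((Finset.measurable_sum _ fun i _ =>
        (measurable_pi_apply i).comp measurable_snd.fst |>.abs).add
        measurable_snd.snd.abs))).pow_const 2
  have hae : (fun w => wt (T w) ^ 2) =ᵐ[π] fun w => a w ^ 2 := by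
    filter_upwards [hsphere] with w hw
    have h1 : l1norm (fun i : Fin d => w i.castSucc) + |w (Fin.last d)| = l1norm w := by
      simp [l1norm, Fin.sum_univ_castSucc]
    show (|a w| * (l1norm (fun i : Fin d => w i.castSucc) + |w (Fin.last d)|)) ^ 2 = a w ^ 2
    rw [h1, hw, mul_one, sq_abs]
  refine ⟨π.map T, ⟨Measure.isProbabilityMeasure_map hT.aemeasurable, fun x hx => ?_⟩, ?_, ?_⟩
  · have hactm : Measurable (act x) := by
      unfold act
      exact measurable_fst.mul (hrelu.comp
        ((Finset.measurable_sum _ fun i _ =>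
          (Measurable.mul_const (f := fun p : ℝ × (Fin d → ℝ) × ℝ => p.2.1 i) ((measurable_pi_apply i).comp measurable_snd.fst) (x i))).add
          measurable_snd.snd))
    constructor
    · rw [integrable_map_measure hactm.aestronglyMeasurable hT.aemeasurable]
      exact hfint x hx
    · rw [integral_map hT.aemeasurable hactm.aestronglyMeasurable]
      exact hf x hx
  · rw [integrable_map_measure hwtm.aestronglyMeasurable hT.aemeasurable]
    exact ha2.congr hae.symm
  · rw [integral_map hT.aemeasurable hwtm.aestronglyMeasurable]
    exact le_of_eq (integral_congr_ae hae)
end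
end

section
/- Let f : X → ℝ admit a Barron representation ρ with M₂² := ∫_Ω |a|²·(‖b‖₁ + |c|)² dρ(a,b,c) < ∞. Then there exist a probability measure π on 𝕊^d = {w ∈ ℝ^{d+1} : ‖w‖₁ = 1} and a measurable function a : 𝕊^d → ℝ such that f(x) = ∫_{𝕊^d} a(w) σ(wᵀx̃) dπ(w) for all x ∈ X and ∫_{𝕊^d} |a(w)|² dπ(w) ≤ 2 M₂². (This says every Barron function lies in the RKHS of the kernel k_π(x,x') = E_{w∼π}[σ(wᵀx̃)σ(wᵀx̃')] for some π.) -/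
open MeasureTheory

noncomputable section

open scoped ENNReal

namespace BarronAux


open MeasureTheory Measure

variable {α W : Type*} [MeasurableSpace α] [MeasurableSpace W]

lemma map_withDensity_ac (ρ : Measure α) {T : α → W} (hT : Measurable T)
    (q : α → ℝ≥0∞) : (ρ.withDensity q).map T ≪ ρ.map T := by
  refine AbsolutelyContinuous.mk fun s hs h0 => ?_
  rw [Measure.map_apply hT hs] at h0 ⊢
  rw [withDensity_apply _ (hT hs), Measure.restrict_eq_zero.mpr h0, lintegral_zero_measure]

lemma lintegral_rnDeriv_mul_eq (ρ : Measure α) [IsFiniteMeasure ρ] {T : α → W}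
    (hT : Measurable T) {q : α → ℝ≥0∞} (hq : Measurable q) (hqfin : ∫⁻ p, q p ∂ρ ≠ ∞)
    {h : W → ℝ≥0∞} (hh : Measurable h) :
    ∫⁻ w, ((ρ.withDensity q).map T).rnDeriv (ρ.map T) w * h w ∂(ρ.map T)
      = ∫⁻ p, q p * h (T p) ∂ρ := by
  haveI : IsFiniteMeasure (ρ.withDensity q) := isFiniteMeasure_withDensity hqfin
  haveI : IsFiniteMeasure ((ρ.withDensity q).map T) := Measure.isFiniteMeasure_map _ _
  haveI : IsFiniteMeasure (ρ.map T) := Measure.isFiniteMeasure_map _ _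
  rw [MeasureTheory.lintegral_rnDeriv_mul (map_withDensity_ac ρ hT q) hh.aemeasurable,
    lintegral_map hh hT]
  exact lintegral_withDensity_eq_lintegral_mul ρ hq (hh.comp hT)

lemma lintegral_rnDeriv_sq_le (ρ : Measure α) [IsFiniteMeasure ρ] {T : α → W}
    (hT : Measurable T) {q : α → ℝ≥0∞} (hq : Measurable q) (hqfin : ∫⁻ p, q p ∂ρ ≠ ∞) :
    ∫⁻ w, ((ρ.withDensity q).map T).rnDeriv (ρ.map T) w ^ 2 ∂(ρ.map T)
      ≤ ∫⁻ p, q p ^ 2 ∂ρ := by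
  set ν := (ρ.withDensity q).map T with hν
  set π := ρ.map T with hπ
  haveI : IsFiniteMeasure (ρ.withDensity q) := isFiniteMeasure_withDensity hqfin
  haveI : IsFiniteMeasure ν := Measure.isFiniteMeasure_map _ _
  haveI : IsFiniteMeasure π := Measure.isFiniteMeasure_map _ _
  set D := ν.rnDeriv π with hD
  have hDm : Measurable D := Measure.measurable_rnDeriv _ _
  set B := ∫⁻ p, q p ^ 2 ∂ρ with hB
  have hcast : ∀ y : ℝ≥0∞, y ^ (2 : ℝ) = y ^ 2 := fun y => by
    rw [show (2 : ℝ) = ((2 : ℕ) : ℝ) by norm_num, ENNReal.rpow_natCast]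
  have key : ∀ n : ℕ, ∫⁻ w, min (D w) n ^ 2 ∂π ≤ B := by
    intro n
    set Dn : W → ℝ≥0∞ := fun w => min (D w) n with hDn
    have hDnm : Measurable Dn := hDm.min measurable_const
    set A := ∫⁻ w, Dn w ^ 2 ∂π with hA
    have hAfin : A ≠ ∞ := by
      have h1 : A ≤ ∫⁻ _, (n : ℝ≥0∞) ^ 2 ∂π :=
        lintegral_mono fun w => by gcongr; exact min_le_right _ _
      rw [lintegral_const] at h1
      exact (h1.trans_lt (ENNReal.mul_lt_top
        (ENNReal.pow_ne_top (ENNReal.natCast_ne_top n)).lt_top (measure_lt_top _ _))).ne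
    have hmaps : ∫⁻ p, Dn (T p) ^ 2 ∂ρ = A := by
      rw [hA, hπ, lintegral_map (hDnm.pow_const 2) hT]
    have step1 : A ≤ ∫⁻ p, q p * Dn (T p) ∂ρ := by
      rw [← lintegral_rnDeriv_mul_eq ρ hT hq hqfin hDnm]
      refine lintegral_mono fun w => ?_
      rw [sq]
      exact mul_le_mul_left (min_le_left _ _) _
    have hCS : ∫⁻ p, q p * Dn (T p) ∂ρ ≤ B ^ (1/2 : ℝ) * A ^ (1/2 : ℝ) := by
      have h22 : (2 : ℝ).HolderConjugate 2 := Real.holderConjugate_iff.mpr ⟨by norm_num, by norm_num⟩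
      have hh := ENNReal.lintegral_mul_le_Lp_mul_Lq ρ h22 hq.aemeasurable
        (hDnm.comp hT).aemeasurable
      simp only [Pi.mul_apply, hcast, Function.comp_apply] at hh
      rw [hmaps] at hh
      exact hh
    have hfinal : A ≤ B ^ (1/2 : ℝ) * A ^ (1/2 : ℝ) := step1.trans hCS
    by_cases h0 : A = 0
    · exact h0.le.trans zero_le
    · have hne0 : A ^ (1/2 : ℝ) ≠ 0 := by
        simp [ENNReal.rpow_eq_zero_iff, h0, hAfin]
      have hnetop : A ^ (1/2 : ℝ) ≠ ∞ := by
        simp [ENNReal.rpow_eq_top_iff, h0, hAfin]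
      have hhalf : A ^ (1/2 : ℝ) * A ^ (1/2 : ℝ) = A := by
        rw [← ENNReal.rpow_add _ _ h0 hAfin]
        norm_num
      have h2 : A ^ (1/2 : ℝ) * A ^ (1/2 : ℝ) ≤ B ^ (1/2 : ℝ) * A ^ (1/2 : ℝ) := by
        rw [hhalf]; exact hfinal
      have hle : A ^ (1/2 : ℝ) ≤ B ^ (1/2 : ℝ) :=
        (ENNReal.mul_le_mul_iff_left hne0 hnetop).mp h2
      calc A = (A ^ (1/2 : ℝ)) ^ (2 : ℝ) := by
              rw [← ENNReal.rpow_mul]; norm_num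
        _ ≤ (B ^ (1/2 : ℝ)) ^ (2 : ℝ) :=
              ENNReal.rpow_le_rpow hle (by norm_num)
        _ = B := by rw [← ENNReal.rpow_mul]; norm_num
  have hmono : Monotone fun n : ℕ => fun w => min (D w) (n : ℝ≥0∞) ^ 2 := by
    intro m n hmn
    exact fun w => pow_le_pow_left' (min_le_min le_rfl (by exact_mod_cast hmn)) 2
  have hae : ∀ᵐ w ∂π, D w ^ 2 = ⨆ n : ℕ, min (D w) n ^ 2 := by
    filter_upwards [Measure.rnDeriv_lt_top ν π] with w hw
    obtain ⟨n, hn⟩ := ENNReal.exists_nat_gt hw.ne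
    refine le_antisymm ?_ (iSup_le fun m => pow_le_pow_left' (min_le_left _ _) 2)
    have h3 : D w ^ 2 = min (D w) n ^ 2 := by rw [min_eq_left hn.le]
    rw [h3]
    exact le_iSup (fun n : ℕ => min (D w) n ^ 2) n
  rw [lintegral_congr_ae hae,
    lintegral_iSup (fun n => (hDm.min measurable_const).pow_const 2) hmono]
  exact iSup_le key



def rad {d : ℕ} (p : ℝ × (Fin d → ℝ) × ℝ) : ℝ := l1norm p.2.1 + |p.2.2|

def normMap {d : ℕ} (p : ℝ × (Fin d → ℝ) × ℝ) : Fin (d + 1) → ℝ :=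
  if rad p = 0 then (fun i => if i = Fin.last d then 1 else 0)
  else Fin.snoc (fun j => p.2.1 j / rad p) (p.2.2 / rad p)

lemma rad_nonneg {d : ℕ} (p : ℝ × (Fin d → ℝ) × ℝ) : 0 ≤ rad p :=
  add_nonneg (Finset.sum_nonneg fun _ _ => abs_nonneg _) (abs_nonneg _)

lemma measurable_rad {d : ℕ} : Measurable (rad (d := d)) := by
  unfold rad l1norm
  exact (Finset.measurable_sum _ fun i _ =>
    ((measurable_pi_apply i).comp measurable_snd.fst).abs).add measurable_snd.snd.abs

lemma measurable_normMap {d : ℕ} : Measurable (normMap (d := d)) := by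
  unfold normMap
  refine Measurable.ite (measurable_rad (measurableSet_singleton 0)) measurable_const ?_
  rw [measurable_pi_iff]
  intro i
  induction i using Fin.lastCases with
  | last => simpa [Fin.snoc_last] using (show Measurable fun x : ℝ × (Fin d → ℝ) × ℝ => x.2.2 / rad x from
      measurable_snd.snd.div measurable_rad)
  | cast j =>
      simpa [Fin.snoc_castSucc] using
        (show Measurable fun x : ℝ × (Fin d → ℝ) × ℝ => x.2.1 j / rad x from
          ((measurable_pi_apply j).comp measurable_snd.fst).div measurable_rad)

lemma l1norm_normMap {d : ℕ} (p : ℝ × (Fin d → ℝ) × ℝ) : l1norm (normMap p) = 1 := by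
  unfold normMap
  split_ifs with h
  · simp [l1norm, apply_ite abs, Finset.sum_ite_eq']
  · have hr : 0 < rad p := lt_of_le_of_ne (rad_nonneg p) (Ne.symm h)
    unfold l1norm
    rw [Fin.sum_univ_castSucc]
    simp only [Fin.snoc_castSucc, Fin.snoc_last, abs_div, abs_of_pos hr]
    rw [← Finset.sum_div, ← add_div]
    exact div_self h

lemma act_eq_g_mul {d : ℕ} (x : Fin d → ℝ) (p : ℝ × (Fin d → ℝ) × ℝ) :
    act x p = (p.1 * rad p) * relu (actS x (normMap p)) := by
  unfold act normMap
  split_ifs with h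
  · have h2 : l1norm p.2.1 = 0 ∧ |p.2.2| = 0 :=
      (add_eq_zero_iff_of_nonneg (Finset.sum_nonneg fun _ _ => abs_nonneg _)
        (abs_nonneg _)).mp h
    have hc : p.2.2 = 0 := abs_eq_zero.mp h2.2
    have hb : ∀ i, p.2.1 i = 0 := fun i => abs_eq_zero.mp <|
      (Finset.sum_eq_zero_iff_of_nonneg fun _ _ => abs_nonneg _).mp h2.1 i (Finset.mem_univ i)
    have hs : (∑ i, p.2.1 i * x i) = 0 := Finset.sum_eq_zero fun i _ => by rw [hb i, zero_mul]
    rw [hs, hc, h]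
    simp [relu]
  · have hr : 0 < rad p := lt_of_le_of_ne (rad_nonneg p) (Ne.symm h)
    unfold actS
    simp only [Fin.snoc_castSucc, Fin.snoc_last]
    have hsum : (∑ j, p.2.1 j / rad p * x j) + p.2.2 / rad p
        = ((∑ j, p.2.1 j * x j) + p.2.2) / rad p := by
      rw [add_div, Finset.sum_div]
      congr 1
      exact Finset.sum_congr rfl fun j _ => by ring
    rw [hsum]
    unfold relu
    rw [show ((∑ j, p.2.1 j * x j) + p.2.2) / rad p = ((∑ j, p.2.1 j * x j) + p.2.2) / rad p from rfl,
      ← zero_div (rad p), max_div_div_right hr.le, zero_div]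
    field_simp

lemma abs_actS_le {d : ℕ} {x : Fin d → ℝ} (hx : x ∈ cube d) (w : Fin (d + 1) → ℝ) :
    |actS x w| ≤ l1norm w := by
  unfold actS l1norm
  rw [Fin.sum_univ_castSucc]
  refine (abs_add_le _ _).trans (add_le_add ((Finset.abs_sum_le_sum_abs _ _).trans ?_) le_rfl)
  refine Finset.sum_le_sum fun i _ => ?_
  rw [abs_mul]
  refine mul_le_of_le_one_right (abs_nonneg _) ?_
  rw [abs_of_nonneg (hx.1 i)]
  exact hx.2 i

lemma relu_nonneg (t : ℝ) : 0 ≤ relu t := le_max_right _ _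
lemma relu_le_abs (t : ℝ) : relu t ≤ |t| := max_le (le_abs_self t) (abs_nonneg t)

lemma continuous_actS {d : ℕ} (x : Fin d → ℝ) : Continuous fun w : Fin (d+1) → ℝ => actS x w := by
  unfold actS
  refine Continuous.add ?_ (continuous_apply (Fin.last d))
  exact continuous_finset_sum _ fun i _ =>
    (continuous_apply (Fin.castSucc i)).mul continuous_const

lemma measurable_l1norm {d : ℕ} : Measurable (l1norm (d := d)) := by
  unfold l1norm
  exact Finset.measurable_sum _ fun i _ => (measurable_pi_apply i).abs

end BarronAux

open BarronAux

/-- every Barron function lies in the RKHS `H_{k_π}` for some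
probability measure `π` on the ℓ¹ sphere of `ℝ^{d+1}`. -/
theorem barron_subset_rkhs {d : ℕ} (hd : 1 ≤ d) (f : (Fin d → ℝ) → ℝ)
    (ρ : Measure (ℝ × (Fin d → ℝ) × ℝ)) (hρ : IsBarronRep f ρ)
    (hint : Integrable (fun p => wt p ^ 2) ρ)
    (M2sq : ℝ) (hM2 : M2sq = ∫ p, wt p ^ 2 ∂ρ) :
    ∃ (π : Measure (Fin (d + 1) → ℝ)) (a : (Fin (d + 1) → ℝ) → ℝ),
      IsProbabilityMeasure π ∧ (∀ᵐ w ∂π, l1norm w = 1) ∧ Measurable a ∧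
      (∀ x ∈ cube d, Integrable (fun w => a w * relu (actS x w)) π) ∧
      (∀ x ∈ cube d, f x = ∫ w, a w * relu (actS x w) ∂π) ∧
      Integrable (fun w => a w ^ 2) π ∧
      ∫ w, a w ^ 2 ∂π ≤ 2 * M2sq := by
  classical
  obtain ⟨hρprob, hρrep⟩ := hρ
  set T := normMap (d := d) with hTdef
  have hTm : Measurable T := measurable_normMap
  set g : ℝ × (Fin d → ℝ) × ℝ → ℝ := fun p => p.1 * rad p with hgdef
  have hgm : Measurable g := measurable_fst.mul measurable_rad
  have hwt_eq : ∀ p : ℝ × (Fin d → ℝ) × ℝ, wt p = |p.1| * rad p := fun p => rfl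
  have hgabs : ∀ p, |g p| = wt p := fun p => by
    rw [hwt_eq, hgdef]
    simp only
    rw [abs_mul, abs_of_nonneg (rad_nonneg p)]
  have hg2 : ∀ p, g p ^ 2 = wt p ^ 2 := fun p => by rw [← sq_abs (g p), hgabs]
  have hintg2 : Integrable (fun p => g p ^ 2) ρ := by
    have : (fun p : ℝ × (Fin d → ℝ) × ℝ => g p ^ 2) = fun p => wt p ^ 2 := funext hg2
    rw [this]; exact hint
  have hgmem : MemLp g 2 ρ := (memLp_two_iff_integrable_sq hgm.aestronglyMeasurable).mpr hintg2
  have hgint : Integrable g ρ := hgmem.integrable one_le_two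
  -- the two densities
  set qp : ℝ × (Fin d → ℝ) × ℝ → ℝ≥0∞ := fun p => ENNReal.ofReal (g p) with hqpdef
  set qm : ℝ × (Fin d → ℝ) × ℝ → ℝ≥0∞ := fun p => ENNReal.ofReal (-g p) with hqmdef
  have hqpm : Measurable qp := hgm.ennreal_ofReal
  have hqmm : Measurable qm := hgm.neg.ennreal_ofReal
  have hq_le : ∀ p, qp p ≤ ‖g p‖₊ ∧ qm p ≤ ‖g p‖₊ := fun p => by
    constructor <;>
      [rw [← enorm_eq_nnnorm, ← ofReal_norm, Real.norm_eq_abs];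
       rw [← enorm_eq_nnnorm, ← ofReal_norm, Real.norm_eq_abs]] <;>
      exact ENNReal.ofReal_le_ofReal (by cases abs_cases (g p) <;> simp_all <;> linarith)
  have hqpfin : ∫⁻ p, qp p ∂ρ ≠ ∞ :=
    ((lintegral_mono fun p => (hq_le p).1).trans_lt hgint.2).ne
  have hqmfin : ∫⁻ p, qm p ∂ρ ≠ ∞ :=
    ((lintegral_mono fun p => (hq_le p).2).trans_lt hgint.2).ne
  -- the measures
  set π : Measure (Fin (d + 1) → ℝ) := ρ.map T with hπdef
  set νp : Measure (Fin (d + 1) → ℝ) := (ρ.withDensity qp).map T with hνpdef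
  set νm : Measure (Fin (d + 1) → ℝ) := (ρ.withDensity qm).map T with hνmdef
  haveI : IsFiniteMeasure (ρ.withDensity qp) := isFiniteMeasure_withDensity hqpfin
  haveI : IsFiniteMeasure (ρ.withDensity qm) := isFiniteMeasure_withDensity hqmfin
  haveI : IsFiniteMeasure νp := Measure.isFiniteMeasure_map _ _
  haveI : IsFiniteMeasure νm := Measure.isFiniteMeasure_map _ _
  haveI : IsProbabilityMeasure π := Measure.isProbabilityMeasure_map hTm.aemeasurable
  set Dp : (Fin (d + 1) → ℝ) → ℝ≥0∞ := νp.rnDeriv π with hDpdef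
  set Dm : (Fin (d + 1) → ℝ) → ℝ≥0∞ := νm.rnDeriv π with hDmdef
  have hDpm : Measurable Dp := Measure.measurable_rnDeriv _ _
  have hDmm : Measurable Dm := Measure.measurable_rnDeriv _ _
  have hDplt : ∀ᵐ w ∂π, Dp w < ∞ := Measure.rnDeriv_lt_top _ _
  have hDmlt : ∀ᵐ w ∂π, Dm w < ∞ := Measure.rnDeriv_lt_top _ _
  set a : (Fin (d + 1) → ℝ) → ℝ := fun w => (Dp w).toReal - (Dm w).toReal with hadef
  have hameas : Measurable a := hDpm.ennreal_toReal.sub hDmm.ennreal_toReal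
  -- second moment bounds
  set Bp : ℝ≥0∞ := ∫⁻ p, qp p ^ 2 ∂ρ with hBpdef
  set Bm : ℝ≥0∞ := ∫⁻ p, qm p ^ 2 ∂ρ with hBmdef
  have hJp : ∫⁻ w, Dp w ^ 2 ∂π ≤ Bp := lintegral_rnDeriv_sq_le ρ hTm hqpm hqpfin
  have hJm : ∫⁻ w, Dm w ^ 2 ∂π ≤ Bm := lintegral_rnDeriv_sq_le ρ hTm hqmm hqmfin
  have hBsum : Bp + Bm = ∫⁻ p, ENNReal.ofReal (wt p ^ 2) ∂ρ := by
    rw [hBpdef, hBmdef, ← lintegral_add_left (hqpm.pow_const 2)]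
    refine lintegral_congr fun p => ?_
    rw [← hg2 p, hqpdef, hqmdef]
    simp only
    rcases le_total 0 (g p) with h | h
    · rw [ENNReal.ofReal_of_nonpos (neg_nonpos.mpr h), ← ENNReal.ofReal_pow h]
      simp
    · rw [ENNReal.ofReal_of_nonpos h, ← neg_sq (g p), ← ENNReal.ofReal_pow (neg_nonneg.mpr h)]
      simp
  have hBfin : Bp + Bm ≠ ∞ := by
    rw [hBsum]
    have heq : ∀ p : ℝ × (Fin d → ℝ) × ℝ,
        ENNReal.ofReal (wt p ^ 2) = (‖wt p ^ 2‖₊ : ℝ≥0∞) := fun p => by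
      rw [← enorm_eq_nnnorm, ← ofReal_norm, Real.norm_eq_abs, abs_of_nonneg (sq_nonneg _)]
    rw [lintegral_congr heq]
    exact hint.2.ne
  have hBpfin : Bp ≠ ∞ := ne_top_of_le_ne_top hBfin le_self_add
  have hBmfin : Bm ≠ ∞ := ne_top_of_le_ne_top hBfin le_add_self
  have hM2' : M2sq = (Bp + Bm).toReal := by
    rw [hM2, hBsum,
      integral_eq_lintegral_of_nonneg_ae (Filter.Eventually.of_forall fun p => sq_nonneg _)
        hint.1]
  -- L² facts for rnDerivs
  have hIp : Integrable (fun w => (Dp w).toReal ^ 2) π := by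
    have := integrable_toReal_of_lintegral_ne_top (hDpm.pow_const 2).aemeasurable
      (ne_top_of_le_ne_top hBpfin hJp)
    simpa [ENNReal.toReal_pow] using this
  have hIm : Integrable (fun w => (Dm w).toReal ^ 2) π := by
    have := integrable_toReal_of_lintegral_ne_top (hDmm.pow_const 2).aemeasurable
      (ne_top_of_le_ne_top hBmfin hJm)
    simpa [ENNReal.toReal_pow] using this
  have hvp : ∫ w, (Dp w).toReal ^ 2 ∂π = (∫⁻ w, Dp w ^ 2 ∂π).toReal := by
    have := integral_toReal (μ := π) (f := fun w => Dp w ^ 2) (hDpm.pow_const 2).aemeasurable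
      (by filter_upwards [hDplt] with w hw; exact (ENNReal.pow_ne_top hw.ne).lt_top)
    simpa [ENNReal.toReal_pow] using this
  have hvm : ∫ w, (Dm w).toReal ^ 2 ∂π = (∫⁻ w, Dm w ^ 2 ∂π).toReal := by
    have := integral_toReal (μ := π) (f := fun w => Dm w ^ 2) (hDmm.pow_const 2).aemeasurable
      (by filter_upwards [hDmlt] with w hw; exact (ENNReal.pow_ne_top hw.ne).lt_top)
    simpa [ENNReal.toReal_pow] using this
  -- representation for each x in the cube
  have main : ∀ x ∈ cube d, Integrable (fun w => a w * relu (actS x w)) π ∧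
      f x = ∫ w, a w * relu (actS x w) ∂π := by
    intro x hx
    set h : (Fin (d + 1) → ℝ) → ℝ := fun w => relu (actS x w) with hhdef
    have hhc : Continuous h := (continuous_id.max continuous_const).comp (continuous_actS x)
    have hhm : Measurable h := hhc.measurable
    have hh0 : ∀ w, 0 ≤ h w := fun w => relu_nonneg _
    have hh1 : ∀ p, h (T p) ≤ 1 := fun p =>
      (relu_le_abs _).trans ((abs_actS_le hx _).trans_eq (l1norm_normMap p))
    -- positive part
    set Gp : (Fin (d + 1) → ℝ) → ℝ≥0∞ := fun w => Dp w * ENNReal.ofReal (h w) with hGpdef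
    have hGpm : Measurable Gp := hDpm.mul hhm.ennreal_ofReal
    have hGpval : ∫⁻ w, Gp w ∂π = ∫⁻ p, qp p * ENNReal.ofReal (h (T p)) ∂ρ :=
      lintegral_rnDeriv_mul_eq ρ hTm hqpm hqpfin hhm.ennreal_ofReal
    have hGpfin : ∫⁻ w, Gp w ∂π ≠ ∞ := by
      rw [hGpval]
      refine ((lintegral_mono fun p => ?_).trans_lt hqpfin.lt_top).ne
      calc qp p * ENNReal.ofReal (h (T p)) ≤ qp p * 1 :=
            mul_le_mul_right (ENNReal.ofReal_le_one.mpr (hh1 p)) _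
        _ = qp p := mul_one _
    set Gm : (Fin (d + 1) → ℝ) → ℝ≥0∞ := fun w => Dm w * ENNReal.ofReal (h w) with hGmdef
    have hGmm : Measurable Gm := hDmm.mul hhm.ennreal_ofReal
    have hGmval : ∫⁻ w, Gm w ∂π = ∫⁻ p, qm p * ENNReal.ofReal (h (T p)) ∂ρ :=
      lintegral_rnDeriv_mul_eq ρ hTm hqmm hqmfin hhm.ennreal_ofReal
    have hGmfin : ∫⁻ w, Gm w ∂π ≠ ∞ := by
      rw [hGmval]
      refine ((lintegral_mono fun p => ?_).trans_lt hqmfin.lt_top).ne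
      calc qm p * ENNReal.ofReal (h (T p)) ≤ qm p * 1 :=
            mul_le_mul_right (ENNReal.ofReal_le_one.mpr (hh1 p)) _
        _ = qm p := mul_one _
    set Fp : (Fin (d + 1) → ℝ) → ℝ := fun w => (Dp w).toReal * h w with hFpdef
    set Fm : (Fin (d + 1) → ℝ) → ℝ := fun w => (Dm w).toReal * h w with hFmdef
    have hFp_ae : ∀ᵐ w ∂π, (Gp w).toReal = Fp w := by
      filter_upwards [hDplt] with w hw
      rw [hGpdef, hFpdef]
      simp only
      rw [ENNReal.toReal_mul, ENNReal.toReal_ofReal (hh0 w)]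
    have hFm_ae : ∀ᵐ w ∂π, (Gm w).toReal = Fm w := by
      filter_upwards [hDmlt] with w hw
      rw [hGmdef, hFmdef]
      simp only
      rw [ENNReal.toReal_mul, ENNReal.toReal_ofReal (hh0 w)]
    have hFpint : Integrable Fp π :=
      (integrable_toReal_of_lintegral_ne_top hGpm.aemeasurable hGpfin).congr hFp_ae
    have hFmint : Integrable Fm π :=
      (integrable_toReal_of_lintegral_ne_top hGmm.aemeasurable hGmfin).congr hFm_ae
    have hFpval : ∫ w, Fp w ∂π = (∫⁻ p, qp p * ENNReal.ofReal (h (T p)) ∂ρ).toReal := by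
      rw [← integral_congr_ae hFp_ae,
        integral_toReal hGpm.aemeasurable
          (by filter_upwards [hDplt] with w hw
              exact ENNReal.mul_lt_top hw ENNReal.ofReal_lt_top),
        hGpval]
    have hFmval : ∫ w, Fm w ∂π = (∫⁻ p, qm p * ENNReal.ofReal (h (T p)) ∂ρ).toReal := by
      rw [← integral_congr_ae hFm_ae,
        integral_toReal hGmm.aemeasurable
          (by filter_upwards [hDmlt] with w hw
              exact ENNReal.mul_lt_top hw ENNReal.ofReal_lt_top),
        hGmval]
    -- real side
    set up : ℝ × (Fin d → ℝ) × ℝ → ℝ := fun p => max (g p) 0 with hupdef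
    set um : ℝ × (Fin d → ℝ) × ℝ → ℝ := fun p => max (-g p) 0 with humdef
    have hupm : Measurable up := hgm.max measurable_const
    have humm : Measurable um := hgm.neg.max measurable_const
    have hupval : ∫ p, up p * h (T p) ∂ρ
        = (∫⁻ p, qp p * ENNReal.ofReal (h (T p)) ∂ρ).toReal := by
      rw [integral_eq_lintegral_of_nonneg_ae
        (Filter.Eventually.of_forall fun p => mul_nonneg (le_max_right _ _) (hh0 _))
        (hupm.mul (hhm.comp hTm)).aestronglyMeasurable]
      congr 1
      refine lintegral_congr fun p => ?_
      rw [ENNReal.ofReal_mul (le_max_right _ _)]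
      congr 1
      show ENNReal.ofReal (max (g p) 0) = ENNReal.ofReal (g p)
      rcases le_total 0 (g p) with hgp | hgp
      · rw [max_eq_left hgp]
      · rw [max_eq_right hgp, ENNReal.ofReal_of_nonpos hgp, ENNReal.ofReal_zero]
    have humval : ∫ p, um p * h (T p) ∂ρ
        = (∫⁻ p, qm p * ENNReal.ofReal (h (T p)) ∂ρ).toReal := by
      rw [integral_eq_lintegral_of_nonneg_ae
        (Filter.Eventually.of_forall fun p => mul_nonneg (le_max_right _ _) (hh0 _))
        (humm.mul (hhm.comp hTm)).aestronglyMeasurable]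
      congr 1
      refine lintegral_congr fun p => ?_
      rw [ENNReal.ofReal_mul (le_max_right _ _)]
      congr 1
      show ENNReal.ofReal (max (-g p) 0) = ENNReal.ofReal (-g p)
      rcases le_total 0 (-g p) with hgp | hgp
      · rw [max_eq_left hgp]
      · rw [max_eq_right hgp, ENNReal.ofReal_of_nonpos hgp, ENNReal.ofReal_zero]
    -- integrability on the ρ side
    have hwtm : Measurable (wt (d := d)) := measurable_fst.abs.mul measurable_rad
    have hwtint : Integrable (wt (d := d)) ρ :=
      ((memLp_two_iff_integrable_sq hwtm.aestronglyMeasurable).mpr hint).integrable one_le_two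
    have hup_bound : ∀ p, |up p * h (T p)| ≤ wt p := fun p => by
      rw [abs_mul, abs_of_nonneg (le_max_right (g p) 0), abs_of_nonneg (hh0 _)]
      calc up p * h (T p) ≤ |g p| * 1 := by
            refine mul_le_mul ?_ (hh1 p) (hh0 _) (abs_nonneg _)
            exact max_le (le_abs_self _) (abs_nonneg _)
        _ = wt p := by rw [mul_one, hgabs]
    have hum_bound : ∀ p, |um p * h (T p)| ≤ wt p := fun p => by
      rw [abs_mul, abs_of_nonneg (le_max_right (-g p) 0), abs_of_nonneg (hh0 _)]
      calc um p * h (T p) ≤ |g p| * 1 := by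
            refine mul_le_mul ?_ (hh1 p) (hh0 _) (abs_nonneg _)
            exact max_le (neg_le_abs _) (abs_nonneg _)
        _ = wt p := by rw [mul_one, hgabs]
    have hupint : Integrable (fun p => up p * h (T p)) ρ :=
      Integrable.mono' hwtint (hupm.mul (hhm.comp hTm)).aestronglyMeasurable
        (Filter.Eventually.of_forall fun p => by
          rw [Real.norm_eq_abs]; exact hup_bound p)
    have humint : Integrable (fun p => um p * h (T p)) ρ :=
      Integrable.mono' hwtint (humm.mul (hhm.comp hTm)).aestronglyMeasurable
        (Filter.Eventually.of_forall fun p => by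
          rw [Real.norm_eq_abs]; exact hum_bound p)
    -- combine
    have hah : (fun w => a w * relu (actS x w)) = fun w => Fp w - Fm w := by
      funext w
      show ((Dp w).toReal - (Dm w).toReal) * relu (actS x w)
        = (Dp w).toReal * relu (actS x w) - (Dm w).toReal * relu (actS x w)
      ring
    have hint_ah : Integrable (fun w => a w * relu (actS x w)) π := by
      rw [hah]; exact hFpint.sub hFmint
    refine ⟨hint_ah, ?_⟩
    have hrepr := (hρrep x hx).2
    have hact : ∀ p, act x p = up p * h (T p) - um p * h (T p) := fun p => by
      rw [act_eq_g_mul x p]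
      show p.1 * rad p * relu (actS x (normMap p))
        = max (g p) 0 * h (T p) - max (-g p) 0 * h (T p)
      rw [← sub_mul, max_zero_sub_max_neg_zero_eq_self]
    calc f x = ∫ p, act x p ∂ρ := hrepr
      _ = ∫ p, (up p * h (T p) - um p * h (T p)) ∂ρ := by
            exact integral_congr_ae (Filter.Eventually.of_forall fun p => hact p)
      _ = ∫ p, up p * h (T p) ∂ρ - ∫ p, um p * h (T p) ∂ρ := integral_sub hupint humint
      _ = ∫ w, Fp w ∂π - ∫ w, Fm w ∂π := by rw [hFpval, hFmval, hupval, humval]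
      _ = ∫ w, (Fp w - Fm w) ∂π := (integral_sub hFpint hFmint).symm
      _ = ∫ w, a w * relu (actS x w) ∂π := by rw [hah]
  -- integrability of a² and the norm bound
  have habound : ∀ w, ‖a w ^ 2‖ ≤ 2 * ((Dp w).toReal ^ 2 + (Dm w).toReal ^ 2) := fun w => by
    rw [Real.norm_eq_abs, abs_of_nonneg (sq_nonneg _), hadef]
    simp only
    nlinarith [sq_nonneg ((Dp w).toReal + (Dm w).toReal)]
  have hIa2 : Integrable (fun w => a w ^ 2) π :=
    Integrable.mono' ((hIp.add hIm).const_mul 2)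
      ((hameas.pow_const 2).aestronglyMeasurable)
      (Filter.Eventually.of_forall habound)
  have hbound : ∫ w, a w ^ 2 ∂π ≤ 2 * M2sq := by
    have h1 : ∫ w, a w ^ 2 ∂π ≤ ∫ w, 2 * ((Dp w).toReal ^ 2 + (Dm w).toReal ^ 2) ∂π := by
      refine integral_mono hIa2 ((hIp.add hIm).const_mul 2) fun w => ?_
      have h2 := habound w
      rwa [Real.norm_eq_abs, abs_of_nonneg (sq_nonneg _)] at h2
    have t1 := ENNReal.toReal_mono hBpfin hJp
    have t2 := ENNReal.toReal_mono hBmfin hJm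
    calc ∫ w, a w ^ 2 ∂π ≤ ∫ w, 2 * ((Dp w).toReal ^ 2 + (Dm w).toReal ^ 2) ∂π := h1
      _ = 2 * ((∫ w, (Dp w).toReal ^ 2 ∂π) + ∫ w, (Dm w).toReal ^ 2 ∂π) := by
          rw [integral_const_mul, integral_add hIp hIm]
      _ = 2 * ((∫⁻ w, Dp w ^ 2 ∂π).toReal + (∫⁻ w, Dm w ^ 2 ∂π).toReal) := by
          rw [hvp, hvm]
      _ ≤ 2 * (Bp.toReal + Bm.toReal) := by linarith
      _ = 2 * (Bp + Bm).toReal := by rw [ENNReal.toReal_add hBpfin hBmfin]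
      _ = 2 * M2sq := by rw [hM2']
  -- now discharge all goals
  refine ⟨π, a, inferInstance, ?_, hameas, fun x hx => (main x hx).1, fun x hx => (main x hx).2,
    hIa2, hbound⟩
  refine (ae_map_iff hTm.aemeasurable ?_).mpr
    (Filter.Eventually.of_forall fun p => l1norm_normMap p)
  exact measurable_l1norm (measurableSet_singleton 1)
end
end

section
/- Let f : X → ℝ admit a Barron representation ρ with M₂² := ∫_Ω |a|²·(‖b‖₁ + |c|)² dρ(a,b,c) < ∞. Let θ₁,…,θ_m, θ_j = (a_j, b_j, c_j), be i.i.d. random variables with common law ρ on some probability space, and set f̂_m(x) = (1/m) Σ_{j=1}^m a_j σ(b_jᵀx + c_j). Then E[ ∫_X |f(x) − f̂_m(x)|² dμ(x) ] ≤ M₂²/m, and E[ (1/m) Σ_{j=1}^m |a_j|·(‖b_j‖₁ + |c_j|) ] ≤ M₂. -/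
open MeasureTheory

noncomputable section

open ProbabilityTheory

lemma continuous_act2 {d : ℕ} :
    Continuous (fun q : (Fin d → ℝ) × (ℝ × (Fin d → ℝ) × ℝ) => act q.1 q.2) := by
  unfold act relu
  fun_prop

lemma continuous_wt {d : ℕ} : Continuous (wt (d := d)) := by
  unfold wt l1norm
  fun_prop

lemma abs_act_le {d : ℕ} {x : Fin d → ℝ} (hx : x ∈ cube d)
    (p : ℝ × (Fin d → ℝ) × ℝ) : |act x p| ≤ wt p := by
  obtain ⟨h0, h1⟩ := hx
  unfold act wt relu l1norm
  rw [abs_mul]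
  refine mul_le_mul_of_nonneg_left ?_ (abs_nonneg _)
  rw [abs_of_nonneg (le_max_right _ _)]
  refine max_le (le_trans (le_abs_self _) ?_) (by positivity)
  calc |(∑ i, p.2.1 i * x i) + p.2.2| ≤ |∑ i, p.2.1 i * x i| + |p.2.2| := abs_add_le _ _
    _ ≤ (∑ i, |p.2.1 i * x i|) + |p.2.2| := by
        gcongr
        exact Finset.abs_sum_le_sum_abs _ _
    _ ≤ (∑ i, |p.2.1 i|) + |p.2.2| := by
        refine add_le_add_left (Finset.sum_le_sum fun i _ => ?_) _
        rw [abs_mul]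
        have h0i : (0:ℝ) ≤ x i := h0 i
        have h1i : x i ≤ (1:ℝ) := h1 i
        have hxi : |x i| ≤ 1 := abs_le.2 ⟨by linarith, h1i⟩
        calc |p.2.1 i| * |x i| ≤ |p.2.1 i| * 1 :=
              mul_le_mul_of_nonneg_left hxi (abs_nonneg _)
          _ = |p.2.1 i| := mul_one _

lemma pointwise_mc {d : ℕ} (ρ : Measure (ℝ × (Fin d → ℝ) × ℝ)) [IsProbabilityMeasure ρ]
    (hint : Integrable (fun p => wt p ^ 2) ρ)
    {Ω' : Type} [MeasurableSpace Ω'] (P : Measure Ω') [IsProbabilityMeasure P]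
    (m : ℕ) (hm : 1 ≤ m) (θ : Fin m → Ω' → ℝ × (Fin d → ℝ) × ℝ)
    (hmeas : ∀ j, Measurable (θ j))
    (hindep : iIndepFun θ P)
    (hlaw : ∀ j, Measure.map (θ j) P = ρ)
    (x : Fin d → ℝ) (hx : x ∈ cube d) :
    Integrable (fun ω => ((∫ p, act x p ∂ρ) - (m : ℝ)⁻¹ * ∑ j, act x (θ j ω)) ^ 2) P ∧
    ∫ ω, ((∫ p, act x p ∂ρ) - (m : ℝ)⁻¹ * ∑ j, act x (θ j ω)) ^ 2 ∂P
      ≤ (∫ p, wt p ^ 2 ∂ρ) / m := by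
  have hm0 : (m : ℝ) ≠ 0 := Nat.cast_ne_zero.2 (by omega)
  have hca : Continuous (act x) :=
    continuous_act2.comp (continuous_const.prodMk continuous_id)
  have hwt2 : MemLp wt 2 ρ :=
    (memLp_two_iff_integrable_sq continuous_wt.aestronglyMeasurable).2 hint
  have hmemρ : MemLp (act x) 2 ρ := by
    refine hwt2.of_le hca.aestronglyMeasurable (ae_of_all _ fun p => ?_)
    rw [Real.norm_eq_abs, Real.norm_eq_abs]
    exact (abs_act_le hx p).trans (le_abs_self _)
  have hY : ∀ j, MemLp (act x ∘ θ j) 2 P := by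
    intro j
    refine (memLp_map_measure_iff ?_ (hmeas j).aemeasurable).1 ?_
    · rw [hlaw j]; exact hca.aestronglyMeasurable
    · rw [hlaw j]; exact hmemρ
  set S : Ω' → ℝ := fun ω => ∑ j, act x (θ j ω) with hSdef
  have hSsum : S = ∑ j, (act x ∘ θ j) := by
    funext ω; simp [hSdef, Finset.sum_apply, Function.comp]
  have hSmem : MemLp S 2 P := by
    rw [hSsum]; exact memLp_finset_sum' _ fun j _ => hY j
  have hEYj : ∀ j, ∫ ω, act x (θ j ω) ∂P = ∫ p, act x p ∂ρ := by
    intro j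
    conv_rhs => rw [← hlaw j]
    refine (integral_map (hmeas j).aemeasurable ?_).symm
    rw [hlaw j]; exact hca.aestronglyMeasurable
  have hES : ∫ ω, S ω ∂P = (m : ℝ) * ∫ p, act x p ∂ρ := by
    simp only [hSdef]
    rw [integral_finset_sum (f := fun j ω => act x (θ j ω)) _
      (fun j _ => (hY j).integrable one_le_two)]
    simp [hEYj, Finset.sum_const, Finset.card_univ, nsmul_eq_mul]
  have hvar : variance S P = ∑ j, variance (act x ∘ θ j) P := by
    rw [hSsum]
    exact IndepFun.variance_sum (fun j _ => hY j)
      (fun i _ j _ hij => (hindep.indepFun hij).comp hca.measurable hca.measurable)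
  have hvarj : ∀ j : Fin m, variance (act x ∘ θ j) P ≤ ∫ p, wt p ^ 2 ∂ρ := by
    intro j
    have h1 : variance (act x ∘ θ j) P ≤ ∫ ω, (act x (θ j ω)) ^ 2 ∂P := by
      have := variance_le_expectation_sq (X := act x ∘ θ j) (hY j).aestronglyMeasurable
      simpa [Function.comp, Pi.pow_apply] using this
    have h2 : ∫ ω, (act x (θ j ω)) ^ 2 ∂P = ∫ p, (act x p) ^ 2 ∂ρ := by
      conv_rhs => rw [← hlaw j]
      refine (integral_map (f := fun p => act x p ^ 2) (hmeas j).aemeasurable ?_).symm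
      rw [hlaw j]; exact (hca.pow 2).aestronglyMeasurable
    have h3 : ∫ p, (act x p) ^ 2 ∂ρ ≤ ∫ p, wt p ^ 2 ∂ρ := by
      refine integral_mono
        ((memLp_two_iff_integrable_sq hca.aestronglyMeasurable).1 hmemρ) hint fun p => ?_
      rw [← sq_abs (act x p), ← sq_abs (wt p)]
      exact pow_le_pow_left₀ (abs_nonneg _) ((abs_act_le hx p).trans (le_abs_self _)) 2
    linarith
  have hvarS : variance S P ≤ (m : ℝ) * ∫ p, wt p ^ 2 ∂ρ := by
    rw [hvar]
    calc ∑ j : Fin m, variance (act x ∘ θ j) P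
        ≤ ∑ _j : Fin m, ∫ p, wt p ^ 2 ∂ρ := Finset.sum_le_sum fun j _ => hvarj j
      _ = (m : ℝ) * ∫ p, wt p ^ 2 ∂ρ := by
          simp [Finset.sum_const, Finset.card_univ, nsmul_eq_mul]
  have hrw : ∀ ω, ((∫ p, act x p ∂ρ) - (m : ℝ)⁻¹ * S ω) ^ 2
      = (m : ℝ)⁻¹ ^ 2 * (S ω - ∫ ω', S ω' ∂P) ^ 2 := by
    intro ω
    rw [hES]
    field_simp
    ring
  have hDmem : MemLp (fun ω => (∫ p, act x p ∂ρ) - (m : ℝ)⁻¹ * S ω) 2 P :=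
    (memLp_const _).sub (hSmem.const_mul _)
  have hIntD : Integrable (fun ω => ((∫ p, act x p ∂ρ) - (m : ℝ)⁻¹ * S ω) ^ 2) P :=
    (memLp_two_iff_integrable_sq hDmem.aestronglyMeasurable).1 hDmem
  refine ⟨hIntD, ?_⟩
  have hVint : ∫ ω, (S ω - ∫ ω', S ω' ∂P) ^ 2 ∂P = variance S P := by
    rw [variance_eq_integral hSmem.aemeasurable]
  calc ∫ ω, ((∫ p, act x p ∂ρ) - (m : ℝ)⁻¹ * S ω) ^ 2 ∂P
      = (m : ℝ)⁻¹ ^ 2 * ∫ ω, (S ω - ∫ ω', S ω' ∂P) ^ 2 ∂P := by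
        simp_rw [hrw]; rw [integral_const_mul]
    _ = (m : ℝ)⁻¹ ^ 2 * variance S P := by rw [hVint]
    _ ≤ (m : ℝ)⁻¹ ^ 2 * ((m : ℝ) * ∫ p, wt p ^ 2 ∂ρ) := by
        exact mul_le_mul_of_nonneg_left hvarS (by positivity)
    _ = (∫ p, wt p ^ 2 ∂ρ) / m := by field_simp

/-- Monte-Carlo estimate for i.i.d. samples from a Barron
representation: expected squared `L²(μ)` error is at most `M₂²/m` and the
expected path norm is at most `M₂`. -/
theorem barron_monte_carlo {d : ℕ} (hd : 1 ≤ d) (f : (Fin d → ℝ) → ℝ)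
    (ρ : Measure (ℝ × (Fin d → ℝ) × ℝ)) (hρ : IsBarronRep f ρ)
    (hint : Integrable (fun p => wt p ^ 2) ρ)
    (M2sq : ℝ) (hM2 : M2sq = ∫ p, wt p ^ 2 ∂ρ)
    (μ : Measure (Fin d → ℝ)) (hμ : IsProbabilityMeasure μ)
    (hμsupp : μ (cube d)ᶜ = 0)
    {Ω' : Type} [MeasurableSpace Ω'] (P : Measure Ω') (hP : IsProbabilityMeasure P)
    (m : ℕ) (hm : 1 ≤ m) (θ : Fin m → Ω' → ℝ × (Fin d → ℝ) × ℝ)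
    (hmeas : ∀ j, Measurable (θ j))
    (hindep : iIndepFun θ P)
    (hlaw : ∀ j, Measure.map (θ j) P = ρ) :
    (∫ ω, ∫ x, (f x - (m : ℝ)⁻¹ * ∑ j, act x (θ j ω)) ^ 2 ∂μ ∂P ≤ M2sq / m) ∧
    (∫ ω, (m : ℝ)⁻¹ * ∑ j, wt (θ j ω) ∂P ≤ Real.sqrt M2sq) := by
  haveI := hρ.1
  haveI := hμ
  haveI := hP
  have hm0 : (m : ℝ) ≠ 0 := Nat.cast_ne_zero.2 (by omega)
  have hM2nonneg : 0 ≤ M2sq := hM2 ▸ integral_nonneg fun p => sq_nonneg _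
  have hwt2 : MemLp wt 2 ρ :=
    (memLp_two_iff_integrable_sq continuous_wt.aestronglyMeasurable).2 hint
  constructor
  · -- Part 1
    set G : Ω' × (Fin d → ℝ) → ℝ := fun q =>
      ((∫ p, act q.2 p ∂ρ) - (m : ℝ)⁻¹ * ∑ j, act q.2 (θ j q.1)) ^ 2 with hGdef
    have hFmeas : StronglyMeasurable fun x : Fin d → ℝ => ∫ p, act x p ∂ρ :=
      continuous_act2.stronglyMeasurable.integral_prod_right'
    have hGmeas : Measurable G := by
      have h1 : Measurable fun q : Ω' × (Fin d → ℝ) => ∫ p, act q.2 p ∂ρ :=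
        hFmeas.measurable.comp measurable_snd
      have h2 : ∀ j, Measurable fun q : Ω' × (Fin d → ℝ) => act q.2 (θ j q.1) := fun j =>
        continuous_act2.measurable.comp (measurable_snd.prodMk ((hmeas j).comp measurable_fst))
      exact ((h1.sub (measurable_const.mul
        (Finset.measurable_sum _ fun j _ => h2 j))).pow_const 2)
    have hae : ∀ᵐ x ∂μ, x ∈ cube d := by
      rw [ae_iff]
      refine measure_mono_null (fun x hx => ?_) hμsupp
      simpa using hx
    -- replace f by the Barron integral inside the inner integral
    have hout : ∀ ω, ∫ x, (f x - (m : ℝ)⁻¹ * ∑ j, act x (θ j ω)) ^ 2 ∂μ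
        = ∫ x, G (ω, x) ∂μ := by
      intro ω
      refine integral_congr_ae (hae.mono fun x hx => ?_)
      rw [hGdef]
      simp only []
      rw [(hρ.2 x hx).2]
    -- lintegral machinery
    set L : Ω' → ENNReal := fun ω => ∫⁻ x, ENNReal.ofReal (G (ω, x)) ∂μ with hLdef
    have hLmeas : Measurable L :=
      Measurable.lintegral_prod_right' (ENNReal.measurable_ofReal.comp hGmeas)
    have h1 : ∀ ω, ∫ x, G (ω, x) ∂μ = (L ω).toReal := fun ω =>
      integral_eq_lintegral_of_nonneg_ae (ae_of_all _ fun x => sq_nonneg _)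
        ((hGmeas.comp (measurable_prodMk_left)).aestronglyMeasurable)
    have key : ∫⁻ ω, L ω ∂P ≤ ENNReal.ofReal (M2sq / m) := by
      have hswap : ∫⁻ ω, L ω ∂P = ∫⁻ x, ∫⁻ ω, ENNReal.ofReal (G (ω, x)) ∂P ∂μ :=
        lintegral_lintegral_swap (ENNReal.measurable_ofReal.comp hGmeas).aemeasurable
      rw [hswap]
      have hpt : ∀ᵐ x ∂μ, ∫⁻ ω, ENNReal.ofReal (G (ω, x)) ∂P ≤ ENNReal.ofReal (M2sq / m) := by
        filter_upwards [hae] with x hx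
        obtain ⟨hint', hbd⟩ := pointwise_mc ρ hint P m hm θ hmeas hindep hlaw x hx
        rw [hGdef]
        simp only []
        rw [← ofReal_integral_eq_lintegral_ofReal hint' (ae_of_all _ fun ω => sq_nonneg _)]
        refine ENNReal.ofReal_le_ofReal ?_
        rw [hM2]
        exact hbd
      calc ∫⁻ x, ∫⁻ ω, ENNReal.ofReal (G (ω, x)) ∂P ∂μ
          ≤ ∫⁻ _x, ENNReal.ofReal (M2sq / m) ∂μ := lintegral_mono_ae hpt
        _ = ENNReal.ofReal (M2sq / m) := by simp
    simp only [hout, h1]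
    rw [integral_eq_lintegral_of_nonneg_ae (ae_of_all _ fun ω => ENNReal.toReal_nonneg)
      hLmeas.ennreal_toReal.aestronglyMeasurable]
    have hle : ∫⁻ ω, ENNReal.ofReal ((L ω).toReal) ∂P ≤ ENNReal.ofReal (M2sq / m) :=
      le_trans (lintegral_mono fun ω => ENNReal.ofReal_toReal_le) key
    calc (∫⁻ ω, ENNReal.ofReal ((L ω).toReal) ∂P).toReal
        ≤ (ENNReal.ofReal (M2sq / m)).toReal :=
          ENNReal.toReal_mono ENNReal.ofReal_ne_top hle
      _ = M2sq / m := ENNReal.toReal_ofReal (div_nonneg hM2nonneg (Nat.cast_nonneg m))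
  · -- Part 2
    have hwt1 : Integrable wt ρ := hwt2.integrable one_le_two
    have hca : Continuous (wt (d := d)) := continuous_wt
    have hIj : ∀ j, ∫ ω, wt (θ j ω) ∂P = ∫ p, wt p ∂ρ := by
      intro j
      conv_rhs => rw [← hlaw j]
      refine (integral_map (hmeas j).aemeasurable ?_).symm
      rw [hlaw j]; exact hca.aestronglyMeasurable
    have hIntj : ∀ j : Fin m, Integrable (fun ω => wt (θ j ω)) P := by
      intro j
      have hmem : MemLp (wt ∘ θ j) 1 P := by
        refine (memLp_map_measure_iff (g := wt) ?_ (hmeas j).aemeasurable).1 ?_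
        · rw [hlaw j]; exact hca.aestronglyMeasurable
        · rw [hlaw j]; exact hwt2.mono_exponent (by norm_num)
      exact memLp_one_iff_integrable.1 hmem
    have hsq : (∫ p, wt p ∂ρ) ^ 2 ≤ M2sq := by
      have hv := variance_nonneg wt ρ
      rw [variance_eq_sub hwt2] at hv
      have heq : (∫ p, (wt ^ 2) p ∂ρ) = ∫ p, wt p ^ 2 ∂ρ := by
        refine integral_congr_ae (ae_of_all _ fun p => ?_)
        simp [Pi.pow_apply]
      rw [hM2]
      rw [heq] at hv
      linarith
    calc ∫ ω, (m : ℝ)⁻¹ * ∑ j, wt (θ j ω) ∂P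
        = (m : ℝ)⁻¹ * ∑ j, ∫ ω, wt (θ j ω) ∂P := by
          rw [integral_const_mul,
            integral_finset_sum (f := fun j ω => wt (θ j ω)) _ (fun j _ => hIntj j)]
      _ = ∫ p, wt p ∂ρ := by
          simp only [hIj, Finset.sum_const, Finset.card_univ, Fintype.card_fin, nsmul_eq_mul]
          field_simp
      _ ≤ Real.sqrt M2sq := Real.le_sqrt_of_sq_le hsq
end
end

section
/- Fix n ≥ 1, Q > 0 and points x₁,…,x_n ∈ X. Let F_Q be the set of all functions f : X → ℝ admitting a Barron representation ρ with ∫_Ω |a|·(‖b‖₁ + |c|) dρ(a,b,c) ≤ Q. Then the Rademacher complexity of F_Q satisfies (1/(n·2^n)) Σ_{ξ ∈ {−1,1}^n} sup_{f ∈ F_Q} Σ_{i=1}^n ξ_i f(x_i) ≤ 2Q·√(2 ln(2d)/n). -/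
open MeasureTheory

noncomputable section

namespace BarronAux

open Finset

/-- sign vector -/
def sgn {n : ℕ} (ξ : Fin n → Bool) (i : Fin n) : ℝ := if ξ i then 1 else -1

lemma abs_sgn {n : ℕ} (ξ : Fin n → Bool) (i : Fin n) : |sgn ξ i| = 1 := by
  unfold sgn; split <;> simp

lemma sgn_not {n : ℕ} (ξ : Fin n → Bool) (i : Fin n) :
    sgn (fun j => !ξ j) i = -sgn ξ i := by
  unfold sgn; cases h : ξ i <;> simp [h]

/-- the 2(d+1) "vertex" vectors (as functions of sample index) -/
def vvec {n : ℕ} (d : ℕ) (x : Fin n → Fin d → ℝ) (j : Fin (d+1)) (i : Fin n) : ℝ :=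
  if h : (j : ℕ) < d then x i ⟨j, h⟩ else 1

lemma abs_vvec_le {n d : ℕ} {x : Fin n → Fin d → ℝ} (hx : ∀ i, x i ∈ cube d)
    (j : Fin (d+1)) (i : Fin n) : |vvec d x j i| ≤ 1 := by
  unfold vvec
  split
  · next h =>
    have h1 := (hx i).1 ⟨j, h⟩
    have h2 := (hx i).2 ⟨j, h⟩
    simp only [Pi.zero_apply] at h1
    simp only [Pi.one_apply] at h2
    rw [abs_le]; constructor <;> nlinarith
  · simp

/-- the Massart maximum -/
def Mx {n : ℕ} (d : ℕ) (x : Fin n → Fin d → ℝ) (ξ : Fin n → Bool) : ℝ :=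
  Finset.univ.sup' ⟨0, mem_univ 0⟩ fun j : Fin (d+1) => |∑ i, sgn ξ i * vvec d x j i|

lemma le_Mx {n d : ℕ} (x : Fin n → Fin d → ℝ) (ξ : Fin n → Bool) (j : Fin (d+1)) :
    |∑ i, sgn ξ i * vvec d x j i| ≤ Mx d x ξ :=
  Finset.le_sup' (fun j => |∑ i, sgn ξ i * vvec d x j i|) (mem_univ j)

lemma Mx_nonneg {n d : ℕ} (x : Fin n → Fin d → ℝ) (ξ : Fin n → Bool) :
    0 ≤ Mx d x ξ := le_trans (abs_nonneg _) (le_Mx x ξ 0)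

/-- the unit ℓ¹ ball of parameters -/
def Ball (d : ℕ) : Type := {θ : (Fin d → ℝ) × ℝ // l1norm θ.1 + |θ.2| ≤ 1}

instance (d : ℕ) : Nonempty (Ball d) := ⟨⟨(0, 0), by simp [l1norm]⟩⟩

/-- the pre-activation values -/
def uf {n d : ℕ} (x : Fin n → Fin d → ℝ) (i : Fin n) (θ : Ball d) : ℝ :=
  (∑ j, θ.1.1 j * x i j) + θ.1.2

lemma abs_uf_le {n d : ℕ} {x : Fin n → Fin d → ℝ} (hx : ∀ i, x i ∈ cube d)
    (i : Fin n) (θ : Ball d) : |uf x i θ| ≤ 1 := by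
  have h1 : |uf x i θ| ≤ (∑ j, |θ.1.1 j * x i j|) + |θ.1.2| :=
    le_trans (abs_add_le _ _) (by gcongr; exact Finset.abs_sum_le_sum_abs _ _)
  have h2 : ∀ j, |θ.1.1 j * x i j| ≤ |θ.1.1 j| := by
    intro j
    rw [abs_mul]
    have h1 := (hx i).1 j
    have h2 := (hx i).2 j
    simp only [Pi.zero_apply] at h1
    simp only [Pi.one_apply] at h2
    nlinarith [abs_nonneg (θ.1.1 j), abs_of_nonneg h1]
  calc |uf x i θ| ≤ (∑ j, |θ.1.1 j|) + |θ.1.2| := by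
        refine le_trans h1 (add_le_add_left ?_ _)
        exact Finset.sum_le_sum fun j _ => h2 j
    _ ≤ 1 := θ.2


/-- mixed partially-contracted suprema -/
def G {n : ℕ} (d : ℕ) (x : Fin n → Fin d → ℝ) (S : Finset (Fin n)) (ξ : Fin n → Bool) : ℝ :=
  sSup (Set.range fun θ : Ball d =>
    ∑ i, sgn ξ i * (if i ∈ S then uf x i θ else |uf x i θ|))

lemma sum_le_card {n d : ℕ} {x : Fin n → Fin d → ℝ} (hx : ∀ i, x i ∈ cube d)
    (ξ : Fin n → Bool) (w : Fin n → Ball d → ℝ)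
    (hw : ∀ i θ, |w i θ| ≤ 1) (θ : Ball d) (s : Finset (Fin n)) :
    ∑ i ∈ s, sgn ξ i * w i θ ≤ (s.card : ℝ) := by
  calc ∑ i ∈ s, sgn ξ i * w i θ ≤ ∑ i ∈ s, 1 := by
        refine Finset.sum_le_sum fun i _ => ?_
        calc sgn ξ i * w i θ ≤ |sgn ξ i * w i θ| := le_abs_self _
          _ = |w i θ| := by rw [abs_mul, abs_sgn, one_mul]
          _ ≤ 1 := hw i θ
    _ = (s.card : ℝ) := by simp

lemma bddG {n d : ℕ} {x : Fin n → Fin d → ℝ} (hx : ∀ i, x i ∈ cube d)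
    (ξ : Fin n → Bool) (w : Fin n → Ball d → ℝ) (hw : ∀ i θ, |w i θ| ≤ 1) :
    BddAbove (Set.range fun θ : Ball d => ∑ i, sgn ξ i * w i θ) := by
  refine ⟨(n : ℝ), ?_⟩
  rintro y ⟨θ, rfl⟩
  simpa using sum_le_card hx ξ w hw θ Finset.univ

lemma mixed_abs_le {n d : ℕ} {x : Fin n → Fin d → ℝ} (hx : ∀ i, x i ∈ cube d)
    (S : Finset (Fin n)) (i : Fin n) (θ : Ball d) :
    abs (if i ∈ S then uf x i θ else |uf x i θ|) ≤ 1 := by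
  split
  · exact abs_uf_le hx i θ
  · rw [abs_abs]; exact abs_uf_le hx i θ

lemma bddG' {n d : ℕ} {x : Fin n → Fin d → ℝ} (hx : ∀ i, x i ∈ cube d)
    (S : Finset (Fin n)) (ξ : Fin n → Bool) :
    BddAbove (Set.range fun θ : Ball d =>
      ∑ i, sgn ξ i * (if i ∈ S then uf x i θ else |uf x i θ|)) :=
  bddG hx ξ _ (fun i θ => mixed_abs_le hx S i θ)

lemma G_nonneg {n d : ℕ} {x : Fin n → Fin d → ℝ} (hx : ∀ i, x i ∈ cube d)
    (S : Finset (Fin n)) (ξ : Fin n → Bool) : 0 ≤ G d x S ξ := by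
  have h0 : ∀ i : Fin n,
      sgn ξ i * (if i ∈ S then uf x i ⟨(0,0), by simp [l1norm]⟩
        else |uf x i ⟨(0,0), by simp [l1norm]⟩|) = 0 := by
    intro i
    have : uf x i ⟨(0,0), by simp [l1norm]⟩ = 0 := by simp [uf]
    rw [this]; simp
  have : (0 : ℝ) ∈ Set.range fun θ : Ball d =>
      ∑ i, sgn ξ i * (if i ∈ S then uf x i θ else |uf x i θ|) :=
    ⟨⟨(0,0), by simp [l1norm]⟩, by
      show (∑ i, sgn ξ i * (if i ∈ S then uf x i ⟨(0,0), by simp [l1norm]⟩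
        else |uf x i ⟨(0,0), by simp [l1norm]⟩|)) = 0
      rw [Finset.sum_congr rfl fun i _ => h0 i]; simp⟩
  exact le_csSup (bddG' hx S ξ) this

/-- pointwise linear bound: `|∑ᵢ εᵢ (bᵀxᵢ + c)| ≤ (‖b‖₁+|c|) · Mx` for θ in the ball. -/
lemma linear_bound {n d : ℕ} (x : Fin n → Fin d → ℝ) (ξ : Fin n → Bool) (θ : Ball d) :
    |∑ i, sgn ξ i * uf x i θ| ≤ Mx d x ξ := by
  have hexp : ∑ i, sgn ξ i * uf x i θ =
      (∑ j, θ.1.1 j * ∑ i, sgn ξ i * x i j) + θ.1.2 * ∑ i, sgn ξ i := by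
    simp only [uf, mul_add, Finset.mul_sum, Finset.sum_add_distrib]
    rw [Finset.sum_comm]
    congr 1
    · exact Finset.sum_congr rfl fun j _ => Finset.sum_congr rfl fun i _ => by ring
    · exact Finset.sum_congr rfl fun i _ => by ring
  have hS : ∀ j : Fin d, |∑ i, sgn ξ i * x i j| ≤ Mx d x ξ := by
    intro j
    have : ∑ i, sgn ξ i * x i j = ∑ i, sgn ξ i * vvec d x (Fin.castSucc j) i := by
      refine Finset.sum_congr rfl fun i _ => ?_
      unfold vvec
      rw [dif_pos (by simpa using j.2)]
      congr 1
    rw [this]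
    exact le_Mx x ξ _
  have hT : |∑ i, sgn ξ i| ≤ Mx d x ξ := by
    have : ∑ i, sgn ξ i = ∑ i, sgn ξ i * vvec d x (Fin.last d) i := by
      refine Finset.sum_congr rfl fun i _ => ?_
      unfold vvec
      rw [dif_neg (by simp)]
      ring
    rw [this]
    exact le_Mx x ξ _
  rw [hexp]
  calc |(∑ j, θ.1.1 j * ∑ i, sgn ξ i * x i j) + θ.1.2 * ∑ i, sgn ξ i|
      ≤ (∑ j, |θ.1.1 j * ∑ i, sgn ξ i * x i j|) + |θ.1.2 * ∑ i, sgn ξ i| :=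
        le_trans (abs_add_le _ _) (add_le_add_left (Finset.abs_sum_le_sum_abs _ _) _)
    _ ≤ (∑ j, |θ.1.1 j| * Mx d x ξ) + |θ.1.2| * Mx d x ξ := by
        gcongr with j hj
        · rw [abs_mul]
          exact mul_le_mul_of_nonneg_left (hS j) (abs_nonneg _)
        · rw [abs_mul]
          exact mul_le_mul_of_nonneg_left hT (abs_nonneg _)
    _ = (l1norm θ.1.1 + |θ.1.2|) * Mx d x ξ := by
        rw [← Finset.sum_mul]; unfold l1norm; ring
    _ ≤ 1 * Mx d x ξ := mul_le_mul_of_nonneg_right θ.2 (Mx_nonneg x ξ)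
    _ = Mx d x ξ := one_mul _



/-- the two-point (Rademacher pairing) contraction inequality -/
lemma pairing {T : Type*} [Nonempty T] (u R : T → ℝ)
    (hC : BddAbove (Set.range fun θ => u θ + R θ))
    (hD : BddAbove (Set.range fun θ => -u θ + R θ)) :
    sSup (Set.range fun θ => |u θ| + R θ) + sSup (Set.range fun θ => -|u θ| + R θ) ≤
      sSup (Set.range fun θ => u θ + R θ) + sSup (Set.range fun θ => -u θ + R θ) := by
  set C := sSup (Set.range fun θ => u θ + R θ) with hCdef
  set D := sSup (Set.range fun θ => -u θ + R θ) with hDdef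
  have key : ∀ θ θ' : T, (|u θ| + R θ) + (-|u θ'| + R θ') ≤ C + D := by
    intro θ θ'
    have h1 : |u θ| - |u θ'| ≤ |u θ - u θ'| := abs_sub_abs_le_abs_sub _ _
    rcases le_total (u θ') (u θ) with h | h
    · have h2 : |u θ - u θ'| = u θ - u θ' := abs_of_nonneg (by linarith)
      have hc : u θ + R θ ≤ C := le_csSup hC ⟨θ, rfl⟩
      have hdd : -u θ' + R θ' ≤ D := le_csSup hD ⟨θ', rfl⟩
      linarith
    · have h2 : |u θ - u θ'| = -(u θ - u θ') := abs_of_nonpos (by linarith)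
      have hc : u θ' + R θ' ≤ C := le_csSup hC ⟨θ', rfl⟩
      have hdd : -u θ + R θ ≤ D := le_csSup hD ⟨θ, rfl⟩
      linarith
  have h1 : sSup (Set.range fun θ => |u θ| + R θ) ≤
      C + D - sSup (Set.range fun θ => -|u θ| + R θ) := by
    refine csSup_le (Set.range_nonempty _) ?_
    rintro y ⟨θ, rfl⟩
    show |u θ| + R θ ≤ _
    rw [le_sub_iff_add_le]
    have h2 : sSup (Set.range fun θ' => -|u θ'| + R θ') ≤ C + D - (|u θ| + R θ) := by
      refine csSup_le (Set.range_nonempty _) ?_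
      rintro z ⟨θ', rfl⟩
      show -|u θ'| + R θ' ≤ _
      have := key θ θ'
      linarith
    linarith
  linarith

lemma flip_involutive {n : ℕ} (k : Fin n) :
    Function.Involutive (fun ξ : Fin n → Bool => Function.update ξ k (!ξ k)) := by
  intro ξ
  funext i
  rcases eq_or_ne i k with rfl | h
  · simp
  · simp [Function.update_of_ne h]

lemma sum_flip {n : ℕ} (k : Fin n) (H : (Fin n → Bool) → ℝ) :
    ∑ ξ : Fin n → Bool, H ξ =
      ∑ ξ : Fin n → Bool, H (Function.update ξ k (!ξ k)) :=
  (Fintype.sum_equiv ((flip_involutive k).toPerm _) _ _ fun ξ => rfl).symm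

lemma contraction_step {n d : ℕ} {x : Fin n → Fin d → ℝ} (hx : ∀ i, x i ∈ cube d)
    (S : Finset (Fin n)) (k : Fin n) (hk : k ∉ S) :
    ∑ ξ : Fin n → Bool, G d x S ξ ≤ ∑ ξ : Fin n → Bool, G d x (insert k S) ξ := by
  have key : ∀ ξ : Fin n → Bool,
      G d x S ξ + G d x S (Function.update ξ k (!ξ k)) ≤
        G d x (insert k S) ξ + G d x (insert k S) (Function.update ξ k (!ξ k)) := by
    intro ξ
    set ξ' := Function.update ξ k (!ξ k) with hξ'
    have hsgn' : ∀ i, i ≠ k → sgn ξ' i = sgn ξ i := by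
      intro i hi; unfold sgn; rw [hξ', Function.update_of_ne hi]
    have hsgnk : sgn ξ' k = -sgn ξ k := by
      unfold sgn; rw [hξ', Function.update_self]; cases h : ξ k <;> simp
    -- the common remainder
    set R : Ball d → ℝ := fun θ =>
      ∑ i ∈ Finset.univ.erase k, sgn ξ i * (if i ∈ S then uf x i θ else |uf x i θ|) with hR
    set u : Ball d → ℝ := fun θ => sgn ξ k * uf x k θ with hu
    have habsu : ∀ θ, |uf x k θ| = |u θ| := by
      intro θ; rw [hu]; simp only []; rw [abs_mul, abs_sgn, one_mul]
    -- rewriting the four suprema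
    have hRsame : ∀ θ : Ball d,
        ∑ i ∈ Finset.univ.erase k, sgn ξ' i *
            (if i ∈ S then uf x i θ else |uf x i θ|) = R θ := by
      intro θ
      exact Finset.sum_congr rfl fun i hi => by
        rw [hsgn' i (Finset.ne_of_mem_erase hi)]
    have hRsame' : ∀ (c : Fin n → Bool) (θ : Ball d), (∀ i, i ≠ k → sgn c i = sgn ξ i) →
        ∑ i ∈ Finset.univ.erase k, sgn c i *
            (if i ∈ insert k S then uf x i θ else |uf x i θ|) = R θ := by
      intro c θ hc
      refine Finset.sum_congr rfl fun i hi => ?_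
      have hik := Finset.ne_of_mem_erase hi
      rw [hc i hik]
      simp only [Finset.mem_insert, hik, false_or]
    have hGform : ∀ (c : Fin n → Bool) (S' : Finset (Fin n)),
        G d x S' c = sSup (Set.range fun θ =>
          sgn c k * (if k ∈ S' then uf x k θ else |uf x k θ|) +
          ∑ i ∈ Finset.univ.erase k, sgn c i *
            (if i ∈ S' then uf x i θ else |uf x i θ|)) := by
      intro c S'
      unfold G
      exact congrArg sSup (congrArg Set.range (funext fun θ =>
        (Finset.add_sum_erase _ _ (Finset.mem_univ k)).symm))
    have eS : G d x S ξ = sSup (Set.range fun θ => sgn ξ k * |uf x k θ| + R θ) := by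
      rw [hGform]
      exact congrArg sSup (congrArg Set.range (funext fun θ => by rw [if_neg hk]))
    have eS' : G d x S ξ' = sSup (Set.range fun θ => -(sgn ξ k * |uf x k θ|) + R θ) := by
      rw [hGform]
      exact congrArg sSup (congrArg Set.range (funext fun θ => by
        rw [if_neg hk, hsgnk, hRsame θ, neg_mul]))
    have eI : G d x (insert k S) ξ =
        sSup (Set.range fun θ => sgn ξ k * uf x k θ + R θ) := by
      rw [hGform]
      exact congrArg sSup (congrArg Set.range (funext fun θ => by
        rw [if_pos (Finset.mem_insert_self k S), hRsame' ξ θ (fun _ _ => rfl)]))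
    have eI' : G d x (insert k S) ξ' =
        sSup (Set.range fun θ => -(sgn ξ k * uf x k θ) + R θ) := by
      rw [hGform]
      exact congrArg sSup (congrArg Set.range (funext fun θ => by
        rw [if_pos (Finset.mem_insert_self k S), hsgnk, hRsame' ξ' θ hsgn', neg_mul]))
    have Rle : ∀ θ : Ball d, R θ ≤ (((Finset.univ.erase k)).card : ℝ) :=
      fun θ => sum_le_card hx ξ _ (fun i θ' => mixed_abs_le hx S i θ') θ _
    have hbC : BddAbove (Set.range fun θ : Ball d => uf x k θ + R θ) := by
      refine ⟨1 + ((Finset.univ.erase k).card : ℝ), ?_⟩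
      rintro y ⟨θ, rfl⟩
      have h1 : uf x k θ ≤ 1 := le_trans (le_abs_self _) (abs_uf_le hx k θ)
      have h2 := Rle θ
      show uf x k θ + R θ ≤ _
      linarith
    have hbD : BddAbove (Set.range fun θ : Ball d => -uf x k θ + R θ) := by
      refine ⟨1 + ((Finset.univ.erase k).card : ℝ), ?_⟩
      rintro y ⟨θ, rfl⟩
      have h1 : -uf x k θ ≤ 1 := le_trans (neg_le_abs _) (abs_uf_le hx k θ)
      have h2 := Rle θ
      show -uf x k θ + R θ ≤ _
      linarith
    have hpair := pairing (uf x k) R hbC hbD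
    cases h : ξ k with
    | true =>
      have hs : sgn ξ k = 1 := by unfold sgn; rw [h]; simp
      rw [eS, eS', eI, eI']
      simp only [hs, one_mul]
      exact hpair
    | false =>
      have hs : sgn ξ k = -1 := by unfold sgn; rw [h]; simp
      rw [eS, eS', eI, eI']
      simp only [hs, neg_mul, one_mul, neg_neg]
      linarith [hpair]
  have h2 : (2:ℝ) * ∑ ξ : Fin n → Bool, G d x S ξ ≤
      2 * ∑ ξ : Fin n → Bool, G d x (insert k S) ξ := by
    have l := sum_flip k (G d x S)
    have r := sum_flip k (G d x (insert k S))
    calc 2 * ∑ ξ : Fin n → Bool, G d x S ξ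
        = (∑ ξ : Fin n → Bool, G d x S ξ) +
          ∑ ξ : Fin n → Bool, G d x S (Function.update ξ k (!ξ k)) := by rw [← l]; ring
      _ = ∑ ξ : Fin n → Bool, (G d x S ξ + G d x S (Function.update ξ k (!ξ k))) :=
          (Finset.sum_add_distrib).symm
      _ ≤ ∑ ξ : Fin n → Bool, (G d x (insert k S) ξ +
            G d x (insert k S) (Function.update ξ k (!ξ k))) :=
          Finset.sum_le_sum fun ξ _ => key ξ
      _ = (∑ ξ : Fin n → Bool, G d x (insert k S) ξ) +
          ∑ ξ : Fin n → Bool, G d x (insert k S) (Function.update ξ k (!ξ k)) :=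
          Finset.sum_add_distrib
      _ = 2 * ∑ ξ : Fin n → Bool, G d x (insert k S) ξ := by rw [← r]; ring
  linarith



lemma contraction {n d : ℕ} {x : Fin n → Fin d → ℝ} (hx : ∀ i, x i ∈ cube d) :
    ∑ ξ : Fin n → Bool, G d x ∅ ξ ≤
      ∑ ξ : Fin n → Bool, G d x Finset.univ ξ := by
  have main : ∀ S : Finset (Fin n),
      ∑ ξ : Fin n → Bool, G d x ∅ ξ ≤ ∑ ξ : Fin n → Bool, G d x S ξ := by
    intro S
    induction S using Finset.induction with
    | empty => exact le_rfl
    | @insert k S hk ih => exact le_trans ih (contraction_step hx S k hk)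
  exact main Finset.univ

lemma G_univ_le_Mx {n d : ℕ} {x : Fin n → Fin d → ℝ} (hx : ∀ i, x i ∈ cube d)
    (ξ : Fin n → Bool) : G d x Finset.univ ξ ≤ Mx d x ξ := by
  refine Real.sSup_le ?_ (Mx_nonneg x ξ)
  rintro y ⟨θ, rfl⟩
  show (∑ i, sgn ξ i * (if i ∈ Finset.univ then uf x i θ else |uf x i θ|)) ≤ _
  have : ∀ i : Fin n, sgn ξ i * (if i ∈ Finset.univ then uf x i θ else |uf x i θ|)
      = sgn ξ i * uf x i θ := by
    intro i; rw [if_pos (Finset.mem_univ i)]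
  rw [Finset.sum_congr rfl fun i _ => this i]
  exact le_trans (le_abs_self _) (linear_bound x ξ θ)

/-- the per-sign-vector constant -/
def K {n : ℕ} (d : ℕ) (x : Fin n → Fin d → ℝ) (ξ : Fin n → Bool) : ℝ :=
  Mx d x ξ / 2 + G d x ∅ ξ / 2 + G d x ∅ (fun i => !ξ i) / 2

lemma K_nonneg {n d : ℕ} {x : Fin n → Fin d → ℝ} (hx : ∀ i, x i ∈ cube d)
    (ξ : Fin n → Bool) : 0 ≤ K d x ξ := by
  have h1 := Mx_nonneg x ξ
  have h2 := G_nonneg hx ∅ ξ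
  have h3 := G_nonneg hx ∅ (fun i => !ξ i)
  unfold K; linarith

lemma relu_eq (t : ℝ) : relu t = (t + |t|) / 2 := by
  unfold relu
  rcases le_total 0 t with h | h
  · rw [max_eq_left h, abs_of_nonneg h]; ring
  · rw [max_eq_right h, abs_of_nonpos h]; ring

/-- THE pointwise neuron bound -/
lemma neuron_bound {n d : ℕ} {x : Fin n → Fin d → ℝ} (hx : ∀ i, x i ∈ cube d)
    (ξ : Fin n → Bool) (p : ℝ × (Fin d → ℝ) × ℝ) :
    ∑ i, sgn ξ i * act (x i) p ≤ wt p * K d x ξ := by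
  obtain ⟨a, b, c⟩ := p
  set W : ℝ := l1norm b + |c| with hW
  have hW0 : 0 ≤ W := add_nonneg (Finset.sum_nonneg fun j _ => abs_nonneg _) (abs_nonneg _)
  have hl1 : 0 ≤ l1norm b := Finset.sum_nonneg fun j _ => abs_nonneg _
  rcases eq_or_lt_of_le hW0 with hW0' | hWpos
  · -- degenerate case W = 0
    have hc : c = 0 := by
      have : |c| = 0 := by
        have := abs_nonneg c
        simp only [hW] at hW0'
        linarith
      exact abs_eq_zero.mp this
    have hbz : ∀ j, b j = 0 := by
      intro j
      have h1 : l1norm b = 0 := by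
        have := abs_nonneg c
        simp only [hW] at hW0'
        linarith
      have h2 : |b j| ≤ 0 := h1 ▸ Finset.single_le_sum (f := fun j => |b j|)
        (fun j _ => abs_nonneg _) (Finset.mem_univ j)
      have := abs_nonneg (b j)
      exact abs_eq_zero.mp (le_antisymm h2 this)
    have hact : ∀ i, act (x i) (a, b, c) = 0 := by
      intro i
      unfold act
      simp only [hbz, hc, zero_mul, Finset.sum_const_zero, add_zero]
      show a * relu 0 = 0
      rw [relu_eq]; simp
    rw [Finset.sum_congr rfl fun i _ => by rw [hact i, mul_zero]]
    have : wt (a, b, c) = 0 := by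
      unfold wt
      show |a| * W = 0
      rw [← hW0', mul_zero]
    rw [this, zero_mul, Finset.sum_const_zero]
  · -- main case W > 0
    set θ : Ball d := ⟨(fun j => b j / W, c / W), by
      show l1norm (fun j => b j / W) + |c / W| ≤ 1
      have h1 : l1norm (fun j => b j / W) = l1norm b / W := by
        unfold l1norm
        rw [Finset.sum_div]
        exact Finset.sum_congr rfl fun j _ => by
          rw [abs_div, abs_of_pos hWpos]
      rw [h1, abs_div, abs_of_pos hWpos, ← add_div, ← hW, div_self (ne_of_gt hWpos)]⟩
      with hθ
    have hufθ : ∀ i, (∑ j, b j * x i j) + c = W * uf x i θ := by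
      intro i
      unfold uf
      rw [hθ]
      show (∑ j, b j * x i j) + c = W * ((∑ j, b j / W * x i j) + c / W)
      rw [mul_add, Finset.mul_sum]
      congr 1
      · exact Finset.sum_congr rfl fun j _ => by field_simp
      · field_simp
    have hact : ∀ i, act (x i) (a, b, c) = a * W * relu (uf x i θ) := by
      intro i
      unfold act
      show a * relu ((∑ j, b j * x i j) + c) = a * W * relu (uf x i θ)
      rw [hufθ i]
      unfold relu
      rw [mul_assoc]
      congr 1
      rw [max_comm, max_comm (uf x i θ) 0, mul_max_of_nonneg _ _ hW0, mul_zero]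
  -- sum manipulation
    have hsum : ∑ i, sgn ξ i * act (x i) (a, b, c) =
        (a * W) * ((∑ i, sgn ξ i * uf x i θ) + ∑ i, sgn ξ i * |uf x i θ|) / 2 := by
      rw [Finset.sum_congr rfl fun i _ => by rw [hact i]]
      rw [← Finset.sum_add_distrib, Finset.mul_sum, Finset.sum_div]
      refine Finset.sum_congr rfl fun i _ => ?_
      rw [relu_eq]
      ring
    rw [hsum]
    have habs1 : |∑ i, sgn ξ i * uf x i θ| ≤ Mx d x ξ := linear_bound x ξ θ
    have habs2 : abs (∑ i, sgn ξ i * |uf x i θ|) ≤ G d x ∅ ξ + G d x ∅ (fun i => !ξ i) := by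
      have hmem : (∑ i, sgn ξ i * |uf x i θ|) ≤ G d x ∅ ξ := by
        refine le_csSup (bddG' hx ∅ ξ) ⟨θ, ?_⟩
        show (∑ i, sgn ξ i * (if i ∈ (∅ : Finset (Fin n)) then uf x i θ else |uf x i θ|))
          = ∑ i, sgn ξ i * |uf x i θ|
        exact Finset.sum_congr rfl fun i _ => by rw [if_neg (Finset.notMem_empty i)]
      have hmem' : -(∑ i, sgn ξ i * |uf x i θ|) ≤ G d x ∅ (fun i => !ξ i) := by
        refine le_csSup (bddG' hx ∅ (fun i => !ξ i)) ⟨θ, ?_⟩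
        show (∑ i, sgn (fun i => !ξ i) i *
          (if i ∈ (∅ : Finset (Fin n)) then uf x i θ else |uf x i θ|))
          = -∑ i, sgn ξ i * |uf x i θ|
        rw [← Finset.sum_neg_distrib]
        refine Finset.sum_congr rfl fun i _ => by
          rw [if_neg (Finset.notMem_empty i), sgn_not, neg_mul]
      have h1 := G_nonneg hx ∅ ξ
      have h2 := G_nonneg hx ∅ (fun i => !ξ i)
      rw [abs_le]
      constructor <;> linarith
    have hwt : wt (a, b, c) = |a| * W := rfl
    calc (a * W) * ((∑ i, sgn ξ i * uf x i θ) + ∑ i, sgn ξ i * |uf x i θ|) / 2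
        ≤ abs ((a * W) * ((∑ i, sgn ξ i * uf x i θ) + ∑ i, sgn ξ i * |uf x i θ|) / 2) :=
          le_abs_self _
      _ = (|a| * W) * abs ((∑ i, sgn ξ i * uf x i θ) + ∑ i, sgn ξ i * |uf x i θ|) / 2 := by
          rw [abs_div, abs_mul, abs_mul, abs_of_pos hWpos]
          norm_num
      _ ≤ (|a| * W) * (Mx d x ξ + (G d x ∅ ξ + G d x ∅ (fun i => !ξ i))) / 2 := by
          have habs : abs ((∑ i, sgn ξ i * uf x i θ) + ∑ i, sgn ξ i * |uf x i θ|)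
              ≤ Mx d x ξ + (G d x ∅ ξ + G d x ∅ (fun i => !ξ i)) :=
            le_trans (abs_add_le _ _) (add_le_add habs1 habs2)
          have ha0 : 0 ≤ |a| * W := mul_nonneg (abs_nonneg a) hW0
          exact (div_le_div_iff_of_pos_right (by norm_num : (0:ℝ) < 2)).mpr
            (mul_le_mul_of_nonneg_left habs ha0)
      _ = wt (a, b, c) * K d x ξ := by
          rw [hwt]
          unfold K
          ring


/-- Hoeffding-type MGF bound for a fixed vector with entries bounded by 1. -/
lemma mgf_bound {n : ℕ} (a : Fin n → ℝ) (ha : ∀ i, |a i| ≤ 1) (l : ℝ) :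
    ∑ ξ : Fin n → Bool, Real.exp (l * ∑ i, sgn ξ i * a i) ≤
      (2:ℝ) ^ n * Real.exp (l ^ 2 * n / 2) := by
  have step1 : ∀ ξ : Fin n → Bool,
      Real.exp (l * ∑ i, sgn ξ i * a i) = ∏ i, Real.exp (l * (sgn ξ i * a i)) := by
    intro ξ
    rw [← Real.exp_sum, Finset.mul_sum]
  rw [Finset.sum_congr rfl fun ξ _ => step1 ξ]
  have step2 : ∑ ξ : Fin n → Bool, ∏ i, Real.exp (l * (sgn ξ i * a i)) =
      ∏ i, ∑ b : Bool, Real.exp (l * ((if b then (1:ℝ) else -1) * a i)) := by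
    rw [Finset.prod_univ_sum]
    rw [← Fintype.piFinset_univ]
    rfl
  rw [step2]
  have step3 : ∀ i : Fin n,
      ∑ b : Bool, Real.exp (l * ((if b then (1:ℝ) else -1) * a i)) ≤
        2 * Real.exp (l ^ 2 / 2) := by
    intro i
    have heq : ∑ b : Bool, Real.exp (l * ((if b then (1:ℝ) else -1) * a i)) =
        Real.exp (l * a i) + Real.exp (-(l * a i)) := by simp
    rw [heq]
    have hcosh := Real.cosh_le_exp_half_sq (l * a i)
    rw [Real.cosh_eq] at hcosh
    have hsq : a i ^ 2 ≤ 1 := by nlinarith [sq_abs (a i), abs_nonneg (a i), ha i]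
    have hmono : Real.exp ((l * a i) ^ 2 / 2) ≤ Real.exp (l ^ 2 / 2) := by
      apply Real.exp_le_exp.mpr
      have h1 : (l * a i) ^ 2 ≤ l ^ 2 := by
        rw [mul_pow]
        nlinarith [sq_nonneg l]
      linarith
    linarith
  calc ∏ i, ∑ b : Bool, Real.exp (l * ((if b then (1:ℝ) else -1) * a i))
      ≤ ∏ _i : Fin n, 2 * Real.exp (l ^ 2 / 2) := by
        refine Finset.prod_le_prod (fun i _ => ?_) (fun i _ => step3 i)
        exact Finset.sum_nonneg fun b _ => (Real.exp_pos _).le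
    _ = (2:ℝ) ^ n * Real.exp (l ^ 2 * n / 2) := by
        rw [Finset.prod_const, Finset.card_univ, Fintype.card_fin, mul_pow,
          ← Real.exp_nat_mul]
        congr 2
        ring

set_option maxHeartbeats 1000000 in
/-- Massart's finite-class lemma (summed form). -/
lemma massart {n d : ℕ} {x : Fin n → Fin d → ℝ} (hx : ∀ i, x i ∈ cube d)
    (hn : 1 ≤ n) :
    ∑ ξ : Fin n → Bool, Mx d x ξ ≤
      (2:ℝ) ^ n * Real.sqrt (2 * n * Real.log (2 * (d + 1))) := by
  set L : ℝ := Real.log (2 * (d + 1)) with hL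
  have hLpos : 0 < L := by
    apply Real.log_pos
    have : (0:ℝ) ≤ (d:ℝ) := Nat.cast_nonneg d
    nlinarith
  have hnpos : (0:ℝ) < n := by exact_mod_cast hn
  have h2n : (0:ℝ) < (2:ℝ)^n := by positivity
  set l : ℝ := Real.sqrt (2 * L / n) with hl
  have hlpos : 0 < l := Real.sqrt_pos.mpr (by positivity)
  have hlsq : l ^ 2 = 2 * L / n := Real.sq_sqrt (by positivity)
  -- the partition function
  set Z : (Fin n → Bool) → ℝ := fun ξ =>
    ∑ j : Fin (d+1), (Real.exp (l * ∑ i, sgn ξ i * vvec d x j i) +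
      Real.exp (l * ∑ i, sgn ξ i * (- vvec d x j i))) with hZ
  have hZpos : ∀ ξ, 0 < Z ξ := by
    intro ξ
    refine Finset.sum_pos (fun j _ => by positivity) ⟨0, Finset.mem_univ 0⟩
  -- pointwise: Mx ≤ log Z / l
  have hpt : ∀ ξ, Mx d x ξ ≤ Real.log (Z ξ) / l := by
    intro ξ
    obtain ⟨j, _, hj⟩ := Finset.exists_mem_eq_sup' (⟨0, Finset.mem_univ 0⟩ :
      (Finset.univ : Finset (Fin (d+1))).Nonempty)
      (fun j : Fin (d+1) => |∑ i, sgn ξ i * vvec d x j i|)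
    have hexp : Real.exp (l * Mx d x ξ) ≤ Z ξ := by
      have hMxj : Mx d x ξ = |∑ i, sgn ξ i * vvec d x j i| := hj
      have hterm : Real.exp (l * Mx d x ξ) ≤
          Real.exp (l * ∑ i, sgn ξ i * vvec d x j i) +
            Real.exp (l * ∑ i, sgn ξ i * (- vvec d x j i)) := by
        have hneg : ∑ i, sgn ξ i * (- vvec d x j i) =
            -∑ i, sgn ξ i * vvec d x j i := by
          rw [← Finset.sum_neg_distrib]
          exact Finset.sum_congr rfl fun i _ => by ring
        rw [hMxj, hneg, mul_neg]
        rcases abs_cases (∑ i, sgn ξ i * vvec d x j i) with ⟨h1, _⟩ | ⟨h1, _⟩ <;> rw [h1]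
        · linarith [Real.exp_pos (-(l * ∑ i, sgn ξ i * vvec d x j i))]
        · rw [mul_neg]
          linarith [Real.exp_pos (l * ∑ i, sgn ξ i * vvec d x j i)]
      refine le_trans hterm ?_
      exact Finset.single_le_sum (f := fun j => Real.exp (l * ∑ i, sgn ξ i * vvec d x j i) +
        Real.exp (l * ∑ i, sgn ξ i * (- vvec d x j i)))
        (fun j _ => by positivity) (Finset.mem_univ j)
    have hle : l * Mx d x ξ ≤ Real.log (Z ξ) :=
      (Real.le_log_iff_exp_le (hZpos ξ)).mpr hexp
    rw [le_div_iff₀ hlpos, mul_comm]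
    exact hle
  -- Jensen via log x ≤ x - 1
  have hsumZpos : 0 < ∑ ξ : Fin n → Bool, Z ξ :=
    Finset.sum_pos (fun ξ _ => hZpos ξ) ⟨fun _ => true, Finset.mem_univ _⟩
  set z0 : ℝ := ((2:ℝ)^n)⁻¹ * ∑ ξ : Fin n → Bool, Z ξ with hz0
  have hz0pos : 0 < z0 := mul_pos (by positivity) hsumZpos
  have hsumlog : ∑ ξ : Fin n → Bool, Real.log (Z ξ) ≤ (2:ℝ)^n * Real.log z0 := by
    have hlog : ∀ ξ, Real.log (Z ξ) ≤ Real.log z0 + Z ξ / z0 - 1 := by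
      intro ξ
      have h := Real.log_le_sub_one_of_pos (div_pos (hZpos ξ) hz0pos)
      rw [Real.log_div (ne_of_gt (hZpos ξ)) (ne_of_gt hz0pos)] at h
      linarith
    have hcard : (Finset.univ : Finset (Fin n → Bool)).card = 2^n := by
      rw [Finset.card_univ, Fintype.card_fun, Fintype.card_bool, Fintype.card_fin]
    calc ∑ ξ : Fin n → Bool, Real.log (Z ξ)
        ≤ ∑ ξ : Fin n → Bool, (Real.log z0 + Z ξ / z0 - 1) :=
          Finset.sum_le_sum fun ξ _ => hlog ξ
      _ = (2:ℝ)^n * Real.log z0 + (∑ ξ : Fin n → Bool, Z ξ) / z0 - 2^n := by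
          rw [Finset.sum_sub_distrib, Finset.sum_add_distrib, ← Finset.sum_div,
            Finset.sum_const, Finset.sum_const, hcard]
          push_cast
          ring
      _ = (2:ℝ)^n * Real.log z0 := by
          have h2 : (∑ ξ : Fin n → Bool, Z ξ) / z0 = 2^n := by
            rw [div_eq_iff (ne_of_gt hz0pos), hz0, ← mul_assoc,
              mul_inv_cancel₀ (ne_of_gt h2n), one_mul]
          rw [h2]
          ring
  -- bound the partition sum
  have hZb : ∑ ξ : Fin n → Bool, Z ξ ≤
      (2:ℝ)^n * (2 * ((d:ℝ) + 1)) * Real.exp (l^2 * n / 2) := by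
    have hswap : ∑ ξ : Fin n → Bool, Z ξ = ∑ j : Fin (d+1),
        ((∑ ξ : Fin n → Bool, Real.exp (l * ∑ i, sgn ξ i * vvec d x j i)) +
          ∑ ξ : Fin n → Bool, Real.exp (l * ∑ i, sgn ξ i * (- vvec d x j i))) := by
      rw [hZ, Finset.sum_comm]
      exact Finset.sum_congr rfl fun j _ => Finset.sum_add_distrib
    rw [hswap]
    calc ∑ j : Fin (d+1),
        ((∑ ξ : Fin n → Bool, Real.exp (l * ∑ i, sgn ξ i * vvec d x j i)) +
          ∑ ξ : Fin n → Bool, Real.exp (l * ∑ i, sgn ξ i * (- vvec d x j i)))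
        ≤ ∑ _j : Fin (d+1),
            ((2:ℝ) ^ n * Real.exp (l ^ 2 * n / 2) + (2:ℝ) ^ n * Real.exp (l ^ 2 * n / 2)) := by
          refine Finset.sum_le_sum fun j _ => add_le_add ?_ ?_
          · exact mgf_bound (fun i => vvec d x j i) (fun i => abs_vvec_le hx j i) l
          · refine mgf_bound (fun i => - vvec d x j i) (fun i => ?_) l
            rw [abs_neg]
            exact abs_vvec_le hx j i
      _ = (2:ℝ)^n * (2 * ((d:ℝ) + 1)) * Real.exp (l^2 * n / 2) := by
          rw [Finset.sum_const, Finset.card_univ, Fintype.card_fin]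
          push_cast
          ring
  have hlogz0 : Real.log z0 ≤ 2 * L := by
    have hz0le : z0 ≤ (2 * ((d:ℝ) + 1)) * Real.exp (l^2 * n / 2) := by
      rw [hz0]
      rw [inv_mul_le_iff₀ (by positivity)]
      calc ∑ ξ : Fin n → Bool, Z ξ ≤
          (2:ℝ)^n * (2 * ((d:ℝ) + 1)) * Real.exp (l^2 * n / 2) := hZb
        _ = 2 ^ n * (2 * ((d:ℝ) + 1) * Real.exp (l ^ 2 * ↑n / 2)) := by ring
    have hln : l^2 * n / 2 = L := by
      rw [hlsq]
      field_simp
    calc Real.log z0 ≤ Real.log ((2 * ((d:ℝ) + 1)) * Real.exp (l^2 * n / 2)) :=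
          Real.log_le_log hz0pos hz0le
      _ = L + l^2 * n / 2 := by
          rw [Real.log_mul (by positivity) (by positivity), Real.log_exp, hL]
      _ = 2 * L := by rw [hln]; ring
  -- put it together
  have hfinal : ∑ ξ : Fin n → Bool, Mx d x ξ ≤ (2:ℝ)^n * (2 * L) / l := by
    calc ∑ ξ : Fin n → Bool, Mx d x ξ
        ≤ ∑ ξ : Fin n → Bool, Real.log (Z ξ) / l :=
          Finset.sum_le_sum fun ξ _ => hpt ξ
      _ = (∑ ξ : Fin n → Bool, Real.log (Z ξ)) / l := by rw [Finset.sum_div]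
      _ ≤ ((2:ℝ)^n * Real.log z0) / l :=
          (div_le_div_iff_of_pos_right hlpos).mpr hsumlog
      _ ≤ (2:ℝ)^n * (2 * L) / l :=
          (div_le_div_iff_of_pos_right hlpos).mpr
            (mul_le_mul_of_nonneg_left hlogz0 (by positivity))
  have hsqrt : (2 * L) / l = Real.sqrt (2 * n * L) := by
    have hpos : 0 < (2 * L) / l := by positivity
    have hsq2 : ((2 * L) / l)^2 = 2 * n * L := by
      rw [div_pow, hlsq]
      field_simp
    rw [← hsq2, Real.sqrt_sq (le_of_lt hpos)]
  have hLL : Real.sqrt (2 * ↑n * L) = Real.sqrt (2 * ↑n * Real.log (2 * (↑d + 1))) := by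
    rw [hL]
  calc ∑ ξ : Fin n → Bool, Mx d x ξ ≤ (2:ℝ)^n * (2 * L) / l := hfinal
    _ = (2:ℝ)^n * ((2 * L) / l) := by ring
    _ = (2:ℝ)^n * Real.sqrt (2 * n * Real.log (2 * ((d:ℝ) + 1))) := by
        rw [hsqrt, hLL]



lemma orth {n : ℕ} (i i' : Fin n) (h : i ≠ i') :
    ∑ ξ : Fin n → Bool, sgn ξ i * sgn ξ i' = 0 := by
  have hflip := sum_flip i (fun ξ => sgn ξ i * sgn ξ i')
  have hneg : ∀ ξ : Fin n → Bool,
      sgn (Function.update ξ i (!ξ i)) i * sgn (Function.update ξ i (!ξ i)) i'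
        = -(sgn ξ i * sgn ξ i') := by
    intro ξ
    have h1 : sgn (Function.update ξ i (!ξ i)) i = -sgn ξ i := by
      unfold sgn; rw [Function.update_self]; cases hb : ξ i <;> simp
    have h2 : sgn (Function.update ξ i (!ξ i)) i' = sgn ξ i' := by
      unfold sgn; rw [Function.update_of_ne (Ne.symm h)]
    rw [h1, h2]; ring
  rw [Finset.sum_congr rfl (fun ξ _ => hneg ξ), Finset.sum_neg_distrib] at hflip
  linarith

lemma card_bool_vec (n : ℕ) : ((Finset.univ : Finset (Fin n → Bool)).card : ℝ) = 2^n := by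
  rw [Finset.card_univ, Fintype.card_fun, Fintype.card_bool, Fintype.card_fin]
  push_cast
  ring

lemma sumsq {n : ℕ} (a : Fin n → ℝ) :
    ∑ ξ : Fin n → Bool, (∑ i, sgn ξ i * a i)^2 = 2^n * ∑ i, (a i)^2 := by
  have expand : ∀ ξ : Fin n → Bool, (∑ i, sgn ξ i * a i)^2
      = ∑ i, ∑ i', (sgn ξ i * sgn ξ i') * (a i * a i') := by
    intro ξ
    rw [sq, Finset.sum_mul_sum]
    exact Finset.sum_congr rfl fun i _ => Finset.sum_congr rfl fun i' _ => by ring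
  rw [Finset.sum_congr rfl fun ξ _ => expand ξ]
  have hswap : ∑ ξ : Fin n → Bool, ∑ i, ∑ i', (sgn ξ i * sgn ξ i') * (a i * a i')
      = ∑ i, ∑ i', ∑ ξ : Fin n → Bool, (sgn ξ i * sgn ξ i') * (a i * a i') := by
    rw [Finset.sum_comm]
    exact Finset.sum_congr rfl fun i _ => Finset.sum_comm
  rw [hswap]
  have inner : ∀ i i' : Fin n, ∑ ξ : Fin n → Bool, (sgn ξ i * sgn ξ i') * (a i * a i')
      = if i = i' then 2^n * (a i)^2 else 0 := by
    intro i i'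
    rw [← Finset.sum_mul]
    rcases eq_or_ne i i' with rfl | h
    · rw [if_pos rfl]
      have h1 : ∀ ξ : Fin n → Bool, sgn ξ i * sgn ξ i = 1 := by
        intro ξ; unfold sgn; split <;> norm_num
      rw [Finset.sum_congr rfl fun ξ _ => h1 ξ, Finset.sum_const, nsmul_eq_mul,
        card_bool_vec]
      ring
    · rw [if_neg h, orth i i' h, zero_mul]
  rw [Finset.sum_congr rfl fun i _ =>
    Finset.sum_congr rfl fun i' _ => inner i i']
  rw [Finset.sum_congr rfl fun i (_ : i ∈ Finset.univ) => Finset.sum_ite_eq _ i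
    (fun i' => 2^n * (a i)^2)]
  simp only [Finset.mem_univ, if_true]
  rw [← Finset.mul_sum]

lemma massart_l2 {n d : ℕ} {x : Fin n → Fin d → ℝ} (hx : ∀ i, x i ∈ cube d) :
    ∑ ξ : Fin n → Bool, Mx d x ξ ≤
      (2:ℝ)^n * Real.sqrt (((d:ℝ) + 1) * n) := by
  have hMx_sq : ∀ ξ : Fin n → Bool,
      (Mx d x ξ)^2 ≤ ∑ j : Fin (d+1), (∑ i, sgn ξ i * vvec d x j i)^2 := by
    intro ξ
    obtain ⟨j, _, hj⟩ := Finset.exists_mem_eq_sup' (⟨0, Finset.mem_univ 0⟩ :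
      (Finset.univ : Finset (Fin (d+1))).Nonempty)
      (fun j : Fin (d+1) => |∑ i, sgn ξ i * vvec d x j i|)
    have hMxj : Mx d x ξ = |∑ i, sgn ξ i * vvec d x j i| := hj
    rw [hMxj, sq_abs]
    exact Finset.single_le_sum (f := fun j => (∑ i, sgn ξ i * vvec d x j i)^2)
      (fun j _ => sq_nonneg _) (Finset.mem_univ j)
  have hsum_sq : ∑ ξ : Fin n → Bool, (Mx d x ξ)^2 ≤
      (2:ℝ)^n * (((d:ℝ) + 1) * n) := by
    calc ∑ ξ : Fin n → Bool, (Mx d x ξ)^2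
        ≤ ∑ ξ : Fin n → Bool, ∑ j : Fin (d+1), (∑ i, sgn ξ i * vvec d x j i)^2 :=
          Finset.sum_le_sum fun ξ _ => hMx_sq ξ
      _ = ∑ j : Fin (d+1), ∑ ξ : Fin n → Bool, (∑ i, sgn ξ i * vvec d x j i)^2 :=
          Finset.sum_comm
      _ = ∑ j : Fin (d+1), (2:ℝ)^n * ∑ i, (vvec d x j i)^2 :=
          Finset.sum_congr rfl fun j _ => sumsq _
      _ ≤ ∑ _j : Fin (d+1), (2:ℝ)^n * ∑ _i : Fin n, (1:ℝ) := by
          refine Finset.sum_le_sum fun j _ => ?_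
          refine mul_le_mul_of_nonneg_left (Finset.sum_le_sum fun i _ => ?_) (by positivity)
          have := abs_vvec_le hx j i
          nlinarith [sq_abs (vvec d x j i), abs_nonneg (vvec d x j i)]
      _ = (2:ℝ)^n * (((d:ℝ) + 1) * n) := by
          rw [Finset.sum_const, Finset.sum_const, Finset.card_univ, Finset.card_univ,
            Fintype.card_fin, Fintype.card_fin]
          push_cast
          ring
  have hcs : (∑ ξ : Fin n → Bool, Mx d x ξ)^2 ≤
      (2:ℝ)^n * ∑ ξ : Fin n → Bool, (Mx d x ξ)^2 := by
    have h := Finset.sum_mul_sq_le_sq_mul_sq Finset.univ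
      (fun _ : Fin n → Bool => (1:ℝ)) (fun ξ => Mx d x ξ)
    simp only [one_mul, one_pow] at h
    calc (∑ ξ : Fin n → Bool, Mx d x ξ)^2
        ≤ (∑ _ξ : Fin n → Bool, (1:ℝ)) * ∑ ξ : Fin n → Bool, (Mx d x ξ)^2 := h
      _ = (2:ℝ)^n * ∑ ξ : Fin n → Bool, (Mx d x ξ)^2 := by
          rw [Finset.sum_const, nsmul_eq_mul, mul_one, card_bool_vec]
  have h0 : 0 ≤ ∑ ξ : Fin n → Bool, Mx d x ξ :=
    Finset.sum_nonneg fun ξ _ => Mx_nonneg x ξ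
  have hfin : (∑ ξ : Fin n → Bool, Mx d x ξ)^2 ≤
      ((2:ℝ)^n)^2 * (((d:ℝ) + 1) * n) := by
    calc (∑ ξ : Fin n → Bool, Mx d x ξ)^2
        ≤ (2:ℝ)^n * ∑ ξ : Fin n → Bool, (Mx d x ξ)^2 := hcs
      _ ≤ (2:ℝ)^n * ((2:ℝ)^n * (((d:ℝ) + 1) * n)) :=
          mul_le_mul_of_nonneg_left hsum_sq (by positivity)
      _ = ((2:ℝ)^n)^2 * (((d:ℝ) + 1) * n) := by ring
  calc ∑ ξ : Fin n → Bool, Mx d x ξ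
      = Real.sqrt ((∑ ξ : Fin n → Bool, Mx d x ξ)^2) := (Real.sqrt_sq h0).symm
    _ ≤ Real.sqrt (((2:ℝ)^n)^2 * (((d:ℝ) + 1) * n)) := Real.sqrt_le_sqrt hfin
    _ = (2:ℝ)^n * Real.sqrt (((d:ℝ) + 1) * n) := by
        rw [Real.sqrt_mul (sq_nonneg _), Real.sqrt_sq (by positivity : (0:ℝ) ≤ (2:ℝ)^n)]



end BarronAux

open BarronAux

/-- Rademacher complexity bound for the Barron ball of radius `Q`. -/
theorem barron_rademacher {d : ℕ} (hd : 1 ≤ d) (n : ℕ) (hn : 1 ≤ n)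
    (Q : ℝ) (hQ : 0 < Q) (x : Fin n → Fin d → ℝ) (hx : ∀ i, x i ∈ cube d) :
    (1 / (n * 2 ^ n) : ℝ) *
        ∑ ξ : Fin n → Bool,
          sSup ((fun f : (Fin d → ℝ) → ℝ =>
              ∑ i, (if ξ i then (1 : ℝ) else -1) * f (x i)) ''
            {f | ∃ ρ : Measure (ℝ × (Fin d → ℝ) × ℝ),
              IsBarronRep f ρ ∧ Integrable wt ρ ∧ ∫ p, wt p ∂ρ ≤ Q}) ≤
      2 * Q * Real.sqrt (2 * Real.log (2 * d) / n) := by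
  classical
  have hnR : (0:ℝ) < n := by exact_mod_cast hn
  have h2n : (0:ℝ) < 2^n := by positivity
  -- Step 1: per sign-vector bound via the Barron representation
  have hsup : ∀ ξ : Fin n → Bool,
      sSup ((fun f : (Fin d → ℝ) → ℝ =>
          ∑ i, (if ξ i then (1 : ℝ) else -1) * f (x i)) ''
        {f | ∃ ρ : Measure (ℝ × (Fin d → ℝ) × ℝ),
          IsBarronRep f ρ ∧ Integrable wt ρ ∧ ∫ p, wt p ∂ρ ≤ Q}) ≤
      Q * K d x ξ := by
    intro ξ
    refine Real.sSup_le ?_ (mul_nonneg hQ.le (K_nonneg hx ξ))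
    rintro y ⟨f, ⟨ρ, ⟨hprob, hrep⟩, hwint, hwle⟩, rfl⟩
    have hint : ∀ i : Fin n, Integrable (act (x i)) ρ := fun i => (hrep (x i) (hx i)).1
    have hfeq : ∀ i, f (x i) = ∫ p, act (x i) p ∂ρ := fun i => (hrep (x i) (hx i)).2
    have hsgn : ∀ i, (if ξ i then (1:ℝ) else -1) = sgn ξ i := fun i => rfl
    show (∑ i, (if ξ i then (1 : ℝ) else -1) * f (x i)) ≤ Q * K d x ξ
    calc ∑ i, (if ξ i then (1 : ℝ) else -1) * f (x i)
        = ∑ i, ∫ p, sgn ξ i * act (x i) p ∂ρ := by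
          refine Finset.sum_congr rfl fun i _ => ?_
          rw [hsgn i, hfeq i, integral_const_mul]
      _ = ∫ p, ∑ i, sgn ξ i * act (x i) p ∂ρ :=
          (integral_finset_sum Finset.univ fun i _ => (hint i).const_mul _).symm
      _ ≤ ∫ p, wt p * K d x ξ ∂ρ := by
          refine integral_mono
            (integrable_finset_sum Finset.univ fun i _ => (hint i).const_mul _)
            (hwint.mul_const _) ?_
          intro p
          exact neuron_bound hx ξ p
      _ = (∫ p, wt p ∂ρ) * K d x ξ := integral_mul_const _ _
      _ ≤ Q * K d x ξ := mul_le_mul_of_nonneg_right hwle (K_nonneg hx ξ)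
  -- Step 2: sum the per-ξ constants
  have hflipall : ∑ ξ : Fin n → Bool, G d x ∅ (fun i => !ξ i)
      = ∑ ξ : Fin n → Bool, G d x ∅ ξ := by
    have hinv : Function.Involutive (fun ξ : Fin n → Bool => fun i => !ξ i) := by
      intro ξ; funext i; simp
    exact Fintype.sum_equiv (hinv.toPerm _)
      (fun ξ => G d x ∅ (fun i => !ξ i)) (fun ξ => G d x ∅ ξ) (fun ξ => rfl)
  have hKsum : ∑ ξ : Fin n → Bool, K d x ξ ≤
      (3/2) * ∑ ξ : Fin n → Bool, Mx d x ξ := by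
    have hGsum : ∑ ξ : Fin n → Bool, G d x ∅ ξ ≤ ∑ ξ : Fin n → Bool, Mx d x ξ :=
      le_trans (contraction hx) (Finset.sum_le_sum fun ξ _ => G_univ_le_Mx hx ξ)
    have hexpand : ∑ ξ : Fin n → Bool, K d x ξ =
        (∑ ξ : Fin n → Bool, Mx d x ξ) / 2 + (∑ ξ : Fin n → Bool, G d x ∅ ξ) / 2 +
          (∑ ξ : Fin n → Bool, G d x ∅ (fun i => !ξ i)) / 2 := by
      unfold K
      rw [Finset.sum_add_distrib, Finset.sum_add_distrib, Finset.sum_div,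
        Finset.sum_div, Finset.sum_div]
    rw [hexpand, hflipall]
    linarith
  -- Step 3: total bound
  have htot : (1 / (n * 2 ^ n) : ℝ) *
      ∑ ξ : Fin n → Bool,
        sSup ((fun f : (Fin d → ℝ) → ℝ =>
            ∑ i, (if ξ i then (1 : ℝ) else -1) * f (x i)) ''
          {f | ∃ ρ : Measure (ℝ × (Fin d → ℝ) × ℝ),
            IsBarronRep f ρ ∧ Integrable wt ρ ∧ ∫ p, wt p ∂ρ ≤ Q}) ≤
      (1 / (n * 2 ^ n) : ℝ) * (Q * ((3/2) * ∑ ξ : Fin n → Bool, Mx d x ξ)) := by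
    refine mul_le_mul_of_nonneg_left ?_ (by positivity)
    calc ∑ ξ : Fin n → Bool,
        sSup ((fun f : (Fin d → ℝ) → ℝ =>
            ∑ i, (if ξ i then (1 : ℝ) else -1) * f (x i)) ''
          {f | ∃ ρ : Measure (ℝ × (Fin d → ℝ) × ℝ),
            IsBarronRep f ρ ∧ Integrable wt ρ ∧ ∫ p, wt p ∂ρ ≤ Q})
        ≤ ∑ ξ : Fin n → Bool, Q * K d x ξ := Finset.sum_le_sum fun ξ _ => hsup ξ
      _ = Q * ∑ ξ : Fin n → Bool, K d x ξ := by rw [Finset.mul_sum]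
      _ ≤ Q * ((3/2) * ∑ ξ : Fin n → Bool, Mx d x ξ) :=
          mul_le_mul_of_nonneg_left hKsum hQ.le
  refine le_trans htot ?_
  -- Step 4: numerics, splitting on d = 1 vs d ≥ 2
  have hsqrt_helper : ∀ c A : ℝ, 0 ≤ c → c * Real.sqrt A = Real.sqrt (c^2 * A) := by
    intro c A hc
    rw [Real.sqrt_mul (sq_nonneg c), Real.sqrt_sq hc]
  rcases eq_or_lt_of_le hd with hd1 | hd2
  · -- d = 1
    have hd1' : d = 1 := hd1.symm
    subst hd1'
    have hM : ∑ ξ : Fin n → Bool, Mx 1 x ξ ≤ (2:ℝ)^n * Real.sqrt (2 * n) := by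
      have := massart_l2 (n := n) (d := 1) (x := x) hx
      calc ∑ ξ : Fin n → Bool, Mx 1 x ξ
          ≤ (2:ℝ)^n * Real.sqrt (((1:ℝ) + 1) * n) := by exact_mod_cast this
        _ = (2:ℝ)^n * Real.sqrt (2 * n) := by norm_num
    calc (1 / (n * 2 ^ n) : ℝ) * (Q * ((3/2) * ∑ ξ : Fin n → Bool, Mx 1 x ξ))
        ≤ (1 / (n * 2 ^ n) : ℝ) * (Q * ((3/2) * ((2:ℝ)^n * Real.sqrt (2 * n)))) := by
          refine mul_le_mul_of_nonneg_left ?_ (by positivity)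
          refine mul_le_mul_of_nonneg_left ?_ hQ.le
          exact mul_le_mul_of_nonneg_left hM (by norm_num)
      _ = Q * ((3/(2*n)) * Real.sqrt (2 * n)) := by
          field_simp
      _ ≤ Q * (2 * Real.sqrt (2 * Real.log (2 * 1) / n)) := by
          refine mul_le_mul_of_nonneg_left ?_ hQ.le
          rw [hsqrt_helper _ _ (by positivity), hsqrt_helper 2 _ (by norm_num)]
          refine Real.sqrt_le_sqrt ?_
          have hlog2 : (0.6931471803 : ℝ) < Real.log 2 := Real.log_two_gt_d9
          have e1 : (3/(2*(n:ℝ)))^2 * (2 * n) = (9/2) / n := by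
            field_simp
            ring
          have e2 : (2:ℝ)^2 * (2 * Real.log (2*1) / n) = (8 * Real.log 2) / n := by
            norm_num
            ring
          rw [e1, e2]
          gcongr
          linarith
      _ = 2 * Q * Real.sqrt (2 * Real.log (2 * (1:ℕ)) / n) := by
          push_cast
          ring
  · -- d ≥ 2
    have hd2' : (2:ℝ) ≤ (d:ℝ) := by exact_mod_cast hd2
    have hM := massart (x := x) hx hn
    have hkey : 9 * Real.log (2 * ((d:ℝ) + 1)) ≤ 16 * Real.log (2 * d) := by
      have hlogd : Real.log 2 ≤ Real.log d := Real.log_le_log (by norm_num) hd2'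
      have hl2pos : (0:ℝ) < Real.log 2 := Real.log_pos (by norm_num)
      have h1 : Real.log (2 * ((d:ℝ) + 1)) ≤ Real.log (4 * d) := by
        apply Real.log_le_log (by positivity)
        nlinarith
      have h2 : Real.log (4 * (d:ℝ)) = 2 * Real.log 2 + Real.log d := by
        rw [show (4:ℝ) * d = 2 * (2 * d) by ring,
          Real.log_mul (by norm_num) (by positivity),
          Real.log_mul (by norm_num) (by positivity)]
        ring
      have h3 : Real.log (2 * (d:ℝ)) = Real.log 2 + Real.log d :=
        Real.log_mul (by norm_num) (by positivity)
      rw [h3]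
      linarith
    have hlogpos : 0 < Real.log (2 * ((d:ℝ) + 1)) := by
      apply Real.log_pos
      nlinarith
    calc (1 / (n * 2 ^ n) : ℝ) * (Q * ((3/2) * ∑ ξ : Fin n → Bool, Mx d x ξ))
        ≤ (1 / (n * 2 ^ n) : ℝ) *
            (Q * ((3/2) * ((2:ℝ)^n * Real.sqrt (2 * n * Real.log (2 * ((d:ℝ) + 1)))))) := by
          refine mul_le_mul_of_nonneg_left ?_ (by positivity)
          refine mul_le_mul_of_nonneg_left ?_ hQ.le
          refine mul_le_mul_of_nonneg_left ?_ (by norm_num)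
          exact_mod_cast hM
      _ = Q * ((3/(2*n)) * Real.sqrt (2 * n * Real.log (2 * ((d:ℝ) + 1)))) := by
          field_simp
      _ ≤ Q * (2 * Real.sqrt (2 * Real.log (2 * d) / n)) := by
          refine mul_le_mul_of_nonneg_left ?_ hQ.le
          rw [hsqrt_helper _ _ (by positivity), hsqrt_helper 2 _ (by norm_num)]
          refine Real.sqrt_le_sqrt ?_
          have e1 : (3/(2*(n:ℝ)))^2 * (2 * n * Real.log (2 * ((d:ℝ) + 1)))
              = (9 * Real.log (2 * ((d:ℝ) + 1)) / 2) / n := by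
            field_simp
            ring
          have e2 : (2:ℝ)^2 * (2 * Real.log (2 * (d:ℝ)) / n)
              = (8 * Real.log (2 * (d:ℝ))) / n := by
            field_simp
            ring
          rw [e1, e2]
          gcongr
          linarith
      _ = 2 * Q * Real.sqrt (2 * Real.log (2 * d) / n) := by ring
end
end
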